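/- arXiv:2411.16900 — 5 statements merged into one kernel-verified Lean document; each statement's English description precedes it below -/
import Mathlib

section
/- There exists a unique ring automorphism σ of E_A fixing A pointwise, with σ(t^a) = γ(a)·t^a for all representatives a of K/ℤ and σ(ℓ) = ℓ + 1; moreover σ stabilizes A[t^K] and commutes with the derivation ∂ of E_A. -/
open scoped TensorProduct
open Polynomial

noncomputable section

/-- `K[t,t⁻¹] → K[t^K]`: the inclusion of the Laurent polynomials (the group algebra
of `ℤ`) into the group algebra `K⟨K⟩ = K[t^K]` of the additive group `(K,+)`. -/
instance instLaurentToGrpAlg (K : Type) [Field K] :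
    Algebra (LaurentPolynomial K) (AddMonoidAlgebra K K) :=
  (AddMonoidAlgebra.mapDomainRingHom K (Int.castAddHom K)).toAlgebra

variable (K : Type) [Field K] [IsAlgClosed K] [CharZero K]
variable (A : Type) [CommRing A] [Algebra K A] [Algebra (LaurentPolynomial K) A]
  [IsScalarTower K (LaurentPolynomial K) A]

/-- `A[t^K] := A ⊗_{K[t,t⁻¹]} K[t^K]`. -/
abbrev AtK := A ⊗[LaurentPolynomial K] (AddMonoidAlgebra K K)

/-- The ring of exponents `E_A := A[t^K][ℓ]`. -/
abbrev EA := Polynomial (AtK K A)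

/-- The canonical inclusion `A → E_A`. -/
def iA : A →+* EA K A :=
  (Polynomial.C).comp (Algebra.TensorProduct.includeLeftRingHom)

/-- The element `t^a ∈ A[t^K] ⊆ E_A`, for `a ∈ K`. -/
def tpow (a : K) : EA K A :=
  Polynomial.C ((1:A) ⊗ₜ[LaurentPolynomial K] (AddMonoidAlgebra.single a 1))

/-- `t ∈ A`, the image of the Laurent variable. -/
def tA : A := algebraMap (LaurentPolynomial K) A (LaurentPolynomial.T 1)

variable {K A}

/-- `∂ : A → A` is a derivation extending `t·d/dt` on `K[t,t⁻¹]`: it kills the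
constants `K` and sends `t` to `t`. -/
def ExtendsTddt (dA : Derivation ℤ A A) : Prop :=
  (∀ c : K, dA (algebraMap K A c) = 0) ∧ dA (tA K A) = tA K A

/-- The characterizing properties of the derivation `∂` on `E_A`: it extends the
derivation `∂` of `A`, satisfies `∂(t^a) = a·t^a` for all `a ∈ K`, and `∂(ℓ) = 1`. -/
def DProps (dA : Derivation ℤ A A) (D : Derivation ℤ (EA K A) (EA K A)) : Prop :=
  (∀ x : A, D (iA K A x) = iA K A (dA x)) ∧
  (∀ a : K, D (tpow K A a) = a • tpow K A a) ∧
  D (Polynomial.X : EA K A) = 1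

/-- `γ : K → Kˣ` is a group homomorphism from `(K,+)` to `Kˣ` with kernel exactly
`ℤ` (induced by a choice of isomorphism `K/ℤ ≅ Kˣ`). -/
def GammaProps (γ : K → Kˣ) : Prop :=
  (∀ a b : K, γ (a + b) = γ a * γ b) ∧ (∀ a : K, γ a = 1 ↔ ∃ n : ℤ, (n : K) = a)

/-- The characterizing properties of the monodromy automorphism `σ` of `E_A`:
it fixes `A` pointwise, `σ(t^a) = γ(a)·t^a`, and `σ(ℓ) = ℓ + 1`. -/
def SProps (γ : K → Kˣ) (σ : EA K A ≃+* EA K A) : Prop :=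
  (∀ x : A, σ (iA K A x) = iA K A x) ∧
  (∀ a : K, σ (tpow K A a) = ((γ a : K) • tpow K A a)) ∧
  σ (Polynomial.X : EA K A) = Polynomial.X + 1

/-- `A` is a differential `K`-algebra without exponents nor logarithm:
`A^{∂²=0} = K` and `A^{∂+a=0} = 0` for every `a ∈ K` not in `ℤ`. -/
def NoExpLog (dA : Derivation ℤ A A) : Prop :=
  (∀ x : A, dA (dA x) = 0 ↔ ∃ c : K, x = algebraMap K A c) ∧
  (∀ a : K, (¬ ∃ n : ℤ, (n : K) = a) → ∀ x : A, dA x + a • x = 0 → x = 0)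



set_option linter.unusedSectionVars false
set_option synthInstance.maxHeartbeats 1000000
set_option maxHeartbeats 1000000
section Helpers
variable (γ : K → Kˣ) (hm : ∀ a b : K, γ (a + b) = γ a * γ b)
  (hker : ∀ n : ℤ, γ ((n : ℤ) : K) = 1)

/-- coefficient-twisting monoid hom -/
def gmon : Multiplicative K →* AddMonoidAlgebra K K where
  toFun a := ((γ (Multiplicative.toAdd a) : K)) • AddMonoidAlgebra.single (Multiplicative.toAdd a) 1
  map_one' := by
    have h0 : γ 0 = 1 := by simpa using hker 0
    simp [h0, AddMonoidAlgebra.one_def]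
  map_mul' a b := by
    simp only [toAdd_mul]
    rw [hm, smul_mul_smul_comm, AddMonoidAlgebra.single_mul_single, one_mul, Units.val_mul]

def galg : AddMonoidAlgebra K K →ₐ[K] AddMonoidAlgebra K K :=
  AddMonoidAlgebra.lift K (AddMonoidAlgebra K K) K (gmon γ hm hker)

lemma galg_single (a : K) (c : K) :
    galg γ hm hker (AddMonoidAlgebra.single a c) = (c * (γ a : K)) • AddMonoidAlgebra.single a 1 := by
  rw [galg, AddMonoidAlgebra.lift_single]
  simp [gmon, smul_smul]

lemma galg_commutes (f : LaurentPolynomial K) :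
    galg γ hm hker (algebraMap (LaurentPolynomial K) (AddMonoidAlgebra K K) f)
      = algebraMap (LaurentPolynomial K) (AddMonoidAlgebra K K) f := by
  have hmap : ∀ f : LaurentPolynomial K,
      algebraMap (LaurentPolynomial K) (AddMonoidAlgebra K K) f
        = AddMonoidAlgebra.mapDomain (fun n : ℤ => (n : K)) f := fun _ => rfl
  induction f using AddMonoidAlgebra.induction with
  | zero => simp
  | single_add n c f _ _ ih =>
    rw [map_add, map_add, ih]
    congr 1
    rw [hmap, AddMonoidAlgebra.mapDomain_single]
    show galg γ hm hker (AddMonoidAlgebra.single ((n:ℤ):K) c) = AddMonoidAlgebra.single ((n:ℤ):K) c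
    rw [galg_single, hker, Units.val_one, mul_one, AddMonoidAlgebra.smul_single', mul_one]

def ghom : AddMonoidAlgebra K K →ₐ[LaurentPolynomial K] AddMonoidAlgebra K K :=
  { (galg γ hm hker).toRingHom with commutes' := galg_commutes γ hm hker }

lemma ghom_single (a : K) (c : K) :
    ghom γ hm hker (AddMonoidAlgebra.single a c) = (c * (γ a : K)) • AddMonoidAlgebra.single a 1 :=
  galg_single γ hm hker a c

include hm in
lemma gamma_inv_hm (a b : K) : (γ (a+b))⁻¹ = (γ a)⁻¹ * (γ b)⁻¹ := by
  rw [hm]; rw [mul_inv]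

include hker in
lemma gamma_inv_hker (n : ℤ) : (γ ((n:ℤ):K))⁻¹ = 1 := by rw [hker]; simp

/-- the equivalence on the group algebra -/
def gequiv : AddMonoidAlgebra K K ≃ₐ[LaurentPolynomial K] AddMonoidAlgebra K K := by
  refine AlgEquiv.ofAlgHom (ghom γ hm hker)
    (ghom (fun a => (γ a)⁻¹) (gamma_inv_hm γ hm) (gamma_inv_hker γ hker)) ?_ ?_ <;>
  · apply AlgHom.coe_ringHom_injective
    apply AddMonoidAlgebra.ringHom_ext <;> intro a <;>
    · simp only [RingHom.coe_coe, AlgHom.comp_apply, AlgHom.id_apply]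
      rw [ghom_single, AddMonoidAlgebra.smul_single', ghom_single, AddMonoidAlgebra.smul_single']
      congr 1
      simp [mul_assoc]


variable (K A) in
lemma tmul_single_eq (x : A) (a c : K) :
    (x ⊗ₜ[LaurentPolynomial K] AddMonoidAlgebra.single a c : AtK K A)
      = (algebraMap K A c * x) ⊗ₜ[LaurentPolynomial K] AddMonoidAlgebra.single a 1 := by
  have h1 : AddMonoidAlgebra.single a c
      = (algebraMap K (LaurentPolynomial K) c) • (AddMonoidAlgebra.single a 1 : AddMonoidAlgebra K K) := by
    have h2 : (algebraMap (LaurentPolynomial K) (AddMonoidAlgebra K K)) ((algebraMap K (LaurentPolynomial K)) c)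
        = AddMonoidAlgebra.single ((0:ℤ):K) c := by
      show AddMonoidAlgebra.mapDomain (fun n : ℤ => (n : K)) (AddMonoidAlgebra.single (0:ℤ) c) = _
      exact AddMonoidAlgebra.mapDomain_single
    rw [Algebra.smul_def, h2, AddMonoidAlgebra.single_mul_single]
    norm_num
  rw [h1, ← TensorProduct.smul_tmul, Algebra.smul_def, ← IsScalarTower.algebraMap_apply]

variable (K A) in
lemma smul_eq_iA_mul (c : K) (z : EA K A) : c • z = iA K A (algebraMap K A c) * z := by
  rw [Algebra.smul_def]; rfl

/-- the coefficient automorphism of `AtK` -/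
def tau : AtK K A ≃ₐ[LaurentPolynomial K] AtK K A :=
  Algebra.TensorProduct.congr AlgEquiv.refl (gequiv γ hm hker)

lemma tau_tmul (x : A) (y : AddMonoidAlgebra K K) :
    tau γ hm hker (x ⊗ₜ[LaurentPolynomial K] y) = x ⊗ₜ[LaurentPolynomial K] (ghom γ hm hker y) := by
  rfl

variable (K A) in
/-- the shift `ℓ ↦ ℓ + 1` -/
def shiftE : EA K A ≃ₐ[AtK K A] EA K A := Polynomial.algEquivAevalXAddC (1 : AtK K A)

/-- the monodromy automorphism -/
def sigmaE : EA K A ≃+* EA K A :=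
  (Polynomial.mapEquiv (tau γ hm hker).toRingEquiv).trans (shiftE K A).toRingEquiv

lemma shiftE_C (c : AtK K A) : shiftE K A (Polynomial.C c) = Polynomial.C c := by
  rw [shiftE, Polynomial.algEquivAevalXAddC_apply, Polynomial.aeval_C, Polynomial.algebraMap_eq]

lemma shiftE_X : shiftE K A (Polynomial.X) = Polynomial.X + 1 := by
  rw [shiftE, Polynomial.algEquivAevalXAddC_apply, Polynomial.aeval_X, map_one]

lemma sigmaE_C (c : AtK K A) :
    sigmaE γ hm hker (Polynomial.C c) = Polynomial.C (tau γ hm hker c) := by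
  rw [sigmaE, RingEquiv.trans_apply, Polynomial.mapEquiv_apply, Polynomial.map_C]
  exact shiftE_C _

lemma sigmaE_X : sigmaE (A := A) γ hm hker (Polynomial.X) = Polynomial.X + 1 := by
  rw [sigmaE, RingEquiv.trans_apply, Polynomial.mapEquiv_apply, Polynomial.map_X]
  exact shiftE_X

lemma sigmaE_sprops : SProps γ (sigmaE (A := A) γ hm hker) := by
  refine ⟨fun x => ?_, fun a => ?_, sigmaE_X γ hm hker⟩
  · show sigmaE γ hm hker (Polynomial.C (x ⊗ₜ 1)) = _
    rw [sigmaE_C]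
    show Polynomial.C (x ⊗ₜ (ghom γ hm hker 1)) = _
    rw [map_one]
    rfl
  · show sigmaE γ hm hker (Polynomial.C ((1:A) ⊗ₜ AddMonoidAlgebra.single a 1)) = _
    rw [sigmaE_C]
    show Polynomial.C ((1:A) ⊗ₜ (ghom γ hm hker (AddMonoidAlgebra.single a 1))) = _
    rw [ghom_single, one_mul, AddMonoidAlgebra.smul_single', mul_one, tmul_single_eq,
      smul_eq_iA_mul, mul_one]
    rw [show iA K A (algebraMap K A ((γ a : K)))
        = Polynomial.C ((algebraMap K A ((γ a : K))) ⊗ₜ[LaurentPolynomial K] (1 : AddMonoidAlgebra K K)) from rfl,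
      show tpow K A a = Polynomial.C ((1:A) ⊗ₜ[LaurentPolynomial K] AddMonoidAlgebra.single a 1) from rfl,
      ← map_mul, Algebra.TensorProduct.tmul_mul_tmul, mul_one, one_mul]


variable (K A) in
lemma C_induction (P : EA K A → Prop)
    (hadd : ∀ x y, P x → P y → P (x + y))
    (hmul : ∀ x y, P x → P y → P (x * y))
    (hiA : ∀ x : A, P (iA K A x))
    (htpow : ∀ a : K, P (tpow K A a)) :
    ∀ c : AtK K A, P (Polynomial.C c) := by
  have h0 : P (Polynomial.C (0 : AtK K A)) := by
    have := hiA 0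
    rwa [map_zero, ← Polynomial.C_0] at this
  intro c
  induction c using TensorProduct.induction_on with
  | zero => exact h0
  | add x y hx hy => rw [Polynomial.C_add]; exact hadd _ _ hx hy
  | tmul x y =>
    induction y using AddMonoidAlgebra.induction with
    | zero =>
      rw [show x ⊗ₜ[LaurentPolynomial K] (0 : AddMonoidAlgebra K K) = 0 from TensorProduct.tmul_zero _ x]
      exact h0
    | single_add a b f _ _ ih =>
      rw [TensorProduct.tmul_add, Polynomial.C_add]
      refine hadd _ _ ?_ ih
      rw [tmul_single_eq, show ((algebraMap K A b * x) ⊗ₜ[LaurentPolynomial K]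
            (AddMonoidAlgebra.single a 1 : AddMonoidAlgebra K K) : AtK K A)
          = ((algebraMap K A b * x) ⊗ₜ[LaurentPolynomial K] (1 : AddMonoidAlgebra K K))
            * ((1:A) ⊗ₜ[LaurentPolynomial K] (AddMonoidAlgebra.single a 1 : AddMonoidAlgebra K K)) by
            rw [Algebra.TensorProduct.tmul_mul_tmul, mul_one, one_mul], Polynomial.C_mul]
      exact hmul _ _ (hiA (algebraMap K A b * x)) (htpow a)

variable (K A) in
lemma EA_induction (P : EA K A → Prop)
    (hadd : ∀ x y, P x → P y → P (x + y))
    (hmul : ∀ x y, P x → P y → P (x * y))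
    (hiA : ∀ x : A, P (iA K A x))
    (htpow : ∀ a : K, P (tpow K A a))
    (hX : P (Polynomial.X : EA K A)) :
    ∀ z : EA K A, P z := by
  intro z
  induction z using Polynomial.induction_on with
  | C c => exact C_induction K A P hadd hmul hiA htpow c
  | add p q hp hq => exact hadd _ _ hp hq
  | monomial n c h => rw [pow_succ, ← mul_assoc]; exact hmul _ _ h hX

variable (K A) in
lemma hom_agree {f g : EA K A →+* EA K A}
    (h1 : ∀ x : A, f (iA K A x) = g (iA K A x))
    (h2 : ∀ a : K, f (tpow K A a) = g (tpow K A a))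
    (hX : f (Polynomial.X : EA K A) = g (Polynomial.X : EA K A)) :
    ∀ z, f z = g z := by
  refine EA_induction K A (fun z => f z = g z) ?_ ?_ h1 h2 hX
  · intro x y hx hy; rw [map_add, map_add, hx, hy]
  · intro x y hx hy; rw [map_mul, map_mul, hx, hy]


variable (K A) in
lemma sprops_smul {σ : EA K A ≃+* EA K A} (hσ : ∀ x : A, σ (iA K A x) = iA K A x)
    (c : K) (z : EA K A) : σ (c • z) = c • σ z := by
  rw [smul_eq_iA_mul, map_mul, hσ, smul_eq_iA_mul]

variable (K A) in
lemma D_smulK {D : Derivation ℤ (EA K A) (EA K A)} {dA : Derivation ℤ A A}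
    (hD1 : ∀ x : A, D (iA K A x) = iA K A (dA x))
    (hdA1 : ∀ c : K, dA (algebraMap K A c) = 0)
    (c : K) (z : EA K A) : D (c • z) = c • D z := by
  rw [smul_eq_iA_mul, Derivation.leibniz, smul_eq_mul, smul_eq_mul, hD1, hdA1, map_zero,
    mul_zero, add_zero, smul_eq_iA_mul]

end Helpers

/-- There exists a unique ring automorphism `σ` of `E_A` fixing `A`
pointwise, with `σ(t^a) = γ(a)·t^a` for all `a` and `σ(ℓ) = ℓ + 1`; moreover `σ`
stabilizes `A[t^K]` and commutes with the derivation `∂` of `E_A`. -/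
theorem stmt_8 (K : Type) [Field K] [IsAlgClosed K] [CharZero K]
    (A : Type) [CommRing A] [Algebra K A] [Algebra (LaurentPolynomial K) A]
    [IsScalarTower K (LaurentPolynomial K) A]
    (hinj : Function.Injective (algebraMap (LaurentPolynomial K) A))
    (dA : Derivation ℤ A A) (hdA : ExtendsTddt (K := K) dA)
    (γ : K → Kˣ) (hγ : GammaProps γ)
    (D : Derivation ℤ (EA K A) (EA K A)) (hD : DProps (K := K) dA D) :
    (∃! σ : EA K A ≃+* EA K A, SProps γ σ) ∧
    (∀ σ : EA K A ≃+* EA K A, SProps γ σ →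
      (∀ x : AtK K A, σ (Polynomial.C x) ∈
          Set.range (Polynomial.C : AtK K A → EA K A)) ∧
      (∀ x : EA K A, σ (D x) = D (σ x))) := by
  obtain ⟨hm, hk⟩ := hγ
  have hker : ∀ n : ℤ, γ ((n:ℤ):K) = 1 := fun n => (hk _).2 ⟨n, rfl⟩
  constructor
  · refine ⟨sigmaE (A := A) γ hm hker, sigmaE_sprops γ hm hker, ?_⟩
    intro σ hσ
    have hs0 := sigmaE_sprops (A := A) γ hm hker
    have key := hom_agree K A (f := σ.toRingHom) (g := (sigmaE (A := A) γ hm hker).toRingHom)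
      (fun x => by show σ _ = sigmaE γ hm hker _; rw [hσ.1, hs0.1])
      (fun a => by show σ _ = sigmaE γ hm hker _; rw [hσ.2.1, hs0.2.1])
      (by show σ _ = sigmaE γ hm hker _; rw [hσ.2.2, hs0.2.2])
    exact RingEquiv.ext fun z => key z
  · intro σ hσ
    constructor
    · intro x
      refine C_induction K A (fun z => σ z ∈ Set.range (Polynomial.C : AtK K A → EA K A))
        ?_ ?_ ?_ ?_ x
      · rintro u v ⟨p, hp⟩ ⟨q, hq⟩
        exact ⟨p + q, by rw [Polynomial.C_add, hp, hq, ← map_add]⟩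
      · rintro u v ⟨p, hp⟩ ⟨q, hq⟩
        exact ⟨p * q, by rw [Polynomial.C_mul, hp, hq, ← map_mul]⟩
      · intro y
        exact ⟨Algebra.TensorProduct.includeLeftRingHom y, (hσ.1 y).symm⟩
      · intro a
        refine ⟨(γ a : K) • ((1:A) ⊗ₜ[LaurentPolynomial K] AddMonoidAlgebra.single a 1), ?_⟩
        rw [← Polynomial.smul_C]
        exact (hσ.2.1 a).symm
    · intro x
      refine EA_induction K A (fun z => σ (D z) = D (σ z)) ?_ ?_ ?_ ?_ ?_ x
      · intro u v hu hv
        simp only [map_add, hu, hv]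
      · intro u v hu hv
        rw [Derivation.leibniz, smul_eq_mul, smul_eq_mul, map_add, map_mul, map_mul, hu, hv,
          map_mul, Derivation.leibniz, smul_eq_mul, smul_eq_mul]
      · intro y
        rw [hD.1, hσ.1, hσ.1, hD.1]
      · intro a
        rw [hD.2.1 a, sprops_smul K A hσ.1, hσ.2.1 a,
          D_smulK K A hD.1 hdA.1, hD.2.1 a, smul_smul, smul_smul, mul_comm]
      · show σ (D (Polynomial.X : EA K A)) = D (σ (Polynomial.X : EA K A))
        rw [hD.2.2, hσ.2.2, map_one, map_add, hD.2.2, Derivation.map_one_eq_zero, add_zero]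
end
end

section
/- On E_A = A[t^K][ℓ], the operator d_σ = σ − id is surjective and its kernel equals A. -/
open scoped TensorProduct
open Polynomial

noncomputable section

variable (K : Type) [Field K] [IsAlgClosed K] [CharZero K]
variable (A : Type) [CommRing A] [Algebra K A] [Algebra (LaurentPolynomial K) A]
  [IsScalarTower K (LaurentPolynomial K) A]

variable {K A}

set_option linter.unusedSectionVars false

namespace Stmt13Aux

open Polynomial

/-! ### Polynomial difference-operator lemmas -/

lemma smul_cancel {K R : Type} [Field K] [CommRing R] [Algebra K R]
    {u : K} (hu : u ≠ 0) {y : R} (h : u • y = 0) : y = 0 := by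
  have := congrArg (fun z => u⁻¹ • z) h
  simpa [smul_smul, inv_mul_cancel₀ hu] using this

lemma coeff_comp_X_add_one {R : Type} [CommRing R] (p : R[X]) (k : ℕ) :
    (p.comp (X + 1)).coeff k = ∑ n ∈ p.support, p.coeff n * (n.choose k : R) := by
  rw [comp_eq_sum_left, Polynomial.sum, finset_sum_coeff]
  refine Finset.sum_congr rfl fun n _ => ?_
  rw [coeff_C_mul, coeff_X_add_one_pow]

lemma coeff_comp_natDegree {R : Type} [CommRing R] (p : R[X]) :
    (p.comp (X + 1)).coeff p.natDegree = p.coeff p.natDegree := by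
  rw [coeff_comp_X_add_one]
  rw [Finset.sum_eq_single p.natDegree]
  · simp
  · intro n hn hne
    have hle : n ≤ p.natDegree := le_natDegree_of_mem_supp n hn
    rw [Nat.choose_eq_zero_of_lt (lt_of_le_of_ne hle hne)]
    simp
  · intro h
    simp [notMem_support_iff.mp h]

/-- kernel of `p ↦ u•p(X+1) - p` for `u ≠ 1` is trivial -/
lemma delta_ker_ne_one {K R : Type} [Field K] [CommRing R] [Algebra K R]
    {u : K} (hu : u ≠ 1) {p : R[X]} (h : u • p.comp (X + 1) = p) :
    p = 0 := by
  by_contra hp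
  have hc : (u • p.comp (X + 1)).coeff p.natDegree = p.coeff p.natDegree := by rw [h]
  rw [coeff_smul, coeff_comp_natDegree] at hc
  have : (u - 1) • p.coeff p.natDegree = 0 := by
    rw [sub_smul, one_smul, hc, sub_self]
  have h0 := smul_cancel (sub_ne_zero.mpr hu) this
  exact hp (leadingCoeff_eq_zero.mp h0)

/-- kernel of `p ↦ p(X+1) - p` is the constants -/
lemma delta_ker_one (K : Type) [Field K] [CharZero K] {R : Type} [CommRing R] [Algebra K R]
    {p : R[X]} (h : p.comp (X + 1) = p) : ∃ y : R, p = C y := by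
  suffices H : ∀ n : ℕ, ∀ p : R[X], p.natDegree ≤ n → p.comp (X + 1) = p → ∃ y : R, p = C y by
    exact H p.natDegree p le_rfl h
  intro n
  induction n with
  | zero =>
    intro p hp _
    exact ⟨p.coeff 0, eq_C_of_natDegree_eq_zero (Nat.le_zero.mp hp)⟩
  | succ n ih =>
    intro p hp h
    by_cases hd : p.natDegree = 0
    · exact ⟨p.coeff 0, eq_C_of_natDegree_eq_zero hd⟩
    · have hder : (derivative p).comp (X + 1) = derivative p := by
        have := congrArg derivative h
        rw [derivative_comp] at this
        simpa using this
      have hlt : (derivative p).natDegree < p.natDegree := natDegree_derivative_lt hd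
      obtain ⟨y, hy⟩ := ih (derivative p) (by omega) hder
      have hcoeff : ∀ m : ℕ, 1 < m → p.coeff m = 0 := by
        intro m hm
        have h1 : (derivative p).coeff (m - 1) = 0 := by
          rw [hy, coeff_C]
          rw [if_neg (by omega : ¬ (m - 1 = 0))]
        rw [coeff_derivative] at h1
        have hrw : m - 1 + 1 = m := by omega
        rw [hrw] at h1
        have hcast : ((m - 1 : ℕ) + 1 : R) = algebraMap K R ((m : K)) := by
          rw [map_natCast]
          exact_mod_cast congrArg (Nat.cast : ℕ → R) hrw
        rw [hcast] at h1
        have h2 : (m : K) • p.coeff m = 0 := by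
          rw [Algebra.smul_def, mul_comm]; exact h1
        have hm0 : (m : K) ≠ 0 := by exact_mod_cast (by omega : m ≠ 0)
        exact smul_cancel hm0 h2
      have h1 : p.natDegree ≤ 1 := natDegree_le_iff_coeff_eq_zero.mpr hcoeff
      have hform := eq_X_add_C_of_natDegree_le_one h1
      rw [hform] at h
      rw [add_comp, mul_comp, C_comp, X_comp, C_comp] at h
      have hC : C (p.coeff 1) = 0 := by linear_combination h
      have hc1 : p.coeff 1 = 0 := by
        have := congrArg (fun q : R[X] => q.coeff 0) hC
        simpa using this
      rw [hform, hc1]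
      exact ⟨p.coeff 0, by simp⟩

/-- surjectivity of `p ↦ u•p(X+1) - p` for `u` a unit -/
lemma delta_surj {K : Type} [Field K] [CharZero K] {R : Type} [CommRing R] [Algebra K R]
    (u : Kˣ) (q : R[X]) : ∃ p : R[X], (u : K) • p.comp (X + 1) - p = q := by
  suffices H : ∀ n : ℕ, ∀ q : R[X], (q = 0 ∨ q.natDegree < n) →
      ∃ p : R[X], (u : K) • p.comp (X + 1) - p = q by
    exact H (q.natDegree + 1) q (Or.inr (Nat.lt_succ_self _))
  intro n
  induction n with
  | zero =>
    rintro q (rfl | h)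
    · exact ⟨0, by simp⟩
    · omega
  | succ n ih =>
    rintro q (rfl | hq)
    · exact ⟨0, by simp⟩
    set d := q.natDegree with hd
    by_cases hu : (u : K) = 1
    · -- u = 1 case
      set w : R := ((d : K) + 1)⁻¹ • q.leadingCoeff with hw
      set p₀ : R[X] := C w * X ^ (d + 1) with hp₀
      have hcoeffr : ∀ k : ℕ, ((u:K) • p₀.comp (X + 1) - p₀).coeff k
          = w * (((d+1).choose k : R) - if k = d + 1 then 1 else 0) := by
        intro k
        have hcomp : (u : K) • p₀.comp (X + 1) - p₀
            = C w * ((X + 1) ^ (d + 1) - X ^ (d + 1)) := by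
          rw [hu, one_smul, hp₀, mul_comp, C_comp, pow_comp, X_comp]
          ring
        rw [hcomp, coeff_C_mul, coeff_sub, coeff_X_add_one_pow, coeff_X_pow]
      set r : R[X] := q - ((u:K) • p₀.comp (X + 1) - p₀) with hr
      have hrcoeff : ∀ k : ℕ, d ≤ k → r.coeff k = 0 := by
        intro k hk
        rw [hr, coeff_sub, hcoeffr]
        rcases eq_or_lt_of_le hk with h | h
        · rw [← h, if_neg (by omega : ¬ d = d + 1), sub_zero]
          have hch : (((d+1).choose d : ℕ) : R) = algebraMap K R ((d : K) + 1) := by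
            rw [Nat.choose_succ_self_right, map_add, map_natCast, map_one]
            push_cast
            ring
          rw [hch, hw, Algebra.smul_def, mul_assoc, mul_comm q.leadingCoeff, ← mul_assoc,
            ← map_mul, inv_mul_cancel₀ (by exact_mod_cast Nat.succ_ne_zero d : (d : K) + 1 ≠ 0),
            map_one, one_mul, hd, coeff_natDegree, sub_self]
        · have hq0 : q.coeff k = 0 := coeff_eq_zero_of_natDegree_lt h
          rcases eq_or_lt_of_le (Nat.succ_le_of_lt h) with h2 | h2
          · rw [hq0, ← h2, if_pos rfl, Nat.choose_self]
            simp
          · rw [hq0, if_neg (by omega), Nat.choose_eq_zero_of_lt (by omega)]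
            simp
      have hr' : r = 0 ∨ r.natDegree < n := by
        by_cases h0 : r = 0
        · exact Or.inl h0
        · right
          by_cases hd0 : d = 0
          · exfalso
            apply h0
            ext k
            simp only [coeff_zero]
            exact hrcoeff k (by omega)
          · have : r.natDegree < d := by
              rw [natDegree_lt_iff_degree_lt h0, degree_lt_iff_coeff_zero]
              intro m hm
              exact hrcoeff m (by exact_mod_cast hm)
            omega
      obtain ⟨p', hp'⟩ := ih r hr'
      refine ⟨p₀ + p', ?_⟩
      rw [add_comp, smul_add, add_sub_add_comm, hp', hr]
      ring
    · -- u ≠ 1 case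
      set w : R := ((u : K) - 1)⁻¹ • q.leadingCoeff with hw
      set p₀ : R[X] := C w * X ^ d with hp₀
      have hkey : (u : K) • w - w = q.leadingCoeff := by
        have : (u : K) • w - w = (((u:K) - 1) * ((u : K) - 1)⁻¹) • q.leadingCoeff := by
          rw [hw, mul_smul, sub_smul, one_smul]
        rw [this, mul_inv_cancel₀ (sub_ne_zero.mpr hu), one_smul]
      have hcoeffr : ∀ k : ℕ, ((u:K) • p₀.comp (X + 1) - p₀).coeff k
          = (u:K) • (w * ((d.choose k : ℕ) : R)) - w * (if k = d then 1 else 0) := by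
        intro k
        rw [hp₀, mul_comp, C_comp, pow_comp, X_comp, coeff_sub, coeff_smul,
          coeff_C_mul, coeff_C_mul, coeff_X_add_one_pow, coeff_X_pow]
      set r : R[X] := q - ((u:K) • p₀.comp (X + 1) - p₀) with hr
      have hrcoeff : ∀ k : ℕ, d ≤ k → r.coeff k = 0 := by
        intro k hk
        rw [hr, coeff_sub, hcoeffr]
        rcases eq_or_lt_of_le hk with h | h
        · rw [← h, if_pos rfl, Nat.choose_self, Nat.cast_one, mul_one, hkey,
            hd, coeff_natDegree, sub_self]
        · have hq0 : q.coeff k = 0 := coeff_eq_zero_of_natDegree_lt h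
          rw [hq0, if_neg (by omega), Nat.choose_eq_zero_of_lt h]
          simp
      have hr' : r = 0 ∨ r.natDegree < n := by
        by_cases h0 : r = 0
        · exact Or.inl h0
        · right
          by_cases hd0 : d = 0
          · exfalso
            apply h0
            ext k
            simp only [coeff_zero]
            exact hrcoeff k (by omega)
          · have : r.natDegree < d := by
              rw [natDegree_lt_iff_degree_lt h0, degree_lt_iff_coeff_zero]
              intro m hm
              exact hrcoeff m (by exact_mod_cast hm)
            omega
      obtain ⟨p', hp'⟩ := ih r hr'
      refine ⟨p₀ + p', ?_⟩
      rw [add_comp, smul_add, add_sub_add_comm, hp', hr]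
      ring

/-! ### The quotient `K ⧸ ℤ`, representatives and integer parts -/

variable (K : Type) [Field K] [CharZero K]

/-- the subgroup `ℤ ⊆ K` -/
def GamK : AddSubgroup K := AddSubgroup.zmultiples (1 : K)

abbrev QK := K ⧸ GamK K

variable {K}

def cls (a : K) : QK K := QuotientAddGroup.mk a

lemma cls_add_int (m : ℤ) (a : K) : cls ((m : K) + a) = cls a := by
  rw [cls, cls, QuotientAddGroup.eq, GamK, AddSubgroup.mem_zmultiples_iff]
  exact ⟨-m, by push_cast [zsmul_eq_mul]; ring⟩

lemma cls_intCast (n : ℤ) : cls ((n : K)) = (0 : QK K) := by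
  have := cls_add_int (K := K) n 0
  simpa [cls] using this

open scoped Classical in
def rep (c : QK K) : K := if c = 0 then 0 else Quotient.out c

lemma cls_rep (c : QK K) : cls (rep c) = c := by
  rw [rep]
  split_ifs with h
  · subst h
    simpa [cls] using cls_intCast (K := K) 0
  · exact QuotientAddGroup.out_eq' c

lemma rep_zero : rep (0 : QK K) = 0 := by
  rw [rep]
  simp

lemma exists_num (a : K) : ∃ n : ℤ, a = rep (cls a) + (n : K) := by
  have h : cls (rep (cls a)) = cls a := cls_rep _
  rw [cls, cls] at h
  have h2 := AddSubgroup.mem_zmultiples_iff.mp ((QuotientAddGroup.eq).mp h)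
  obtain ⟨n, hn⟩ := h2
  have hn' : (n : K) = -(rep (cls a)) + a := by simpa [zsmul_eq_mul, cls] using hn
  exact ⟨n, by linear_combination -hn'⟩

def num (a : K) : ℤ := (exists_num a).choose

lemma num_spec (a : K) : a = rep (cls a) + (num a : K) := (exists_num a).choose_spec

lemma num_add_int (m : ℤ) (a : K) : num ((m : K) + a) = m + num a := by
  have h1 := num_spec ((m : K) + a)
  rw [cls_add_int] at h1
  have h2 := num_spec a
  have : ((num ((m:K) + a) : ℤ) : K) = ((m + num a : ℤ) : K) := by
    push_cast
    linear_combination h2 - h1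
  exact_mod_cast this

lemma num_rep (c : QK K) : num (rep c) = 0 := by
  have h := num_spec (rep c)
  rw [cls_rep] at h
  have : ((num (rep c) : ℤ) : K) = ((0 : ℤ) : K) := by
    push_cast
    linear_combination -h
  exact_mod_cast this

end Stmt13Aux

namespace Stmt13Aux

open Polynomial
open scoped TensorProduct

section Main

variable (K : Type) [Field K] [IsAlgClosed K] [CharZero K]
variable (A : Type) [CommRing A] [Algebra K A] [Algebra (LaurentPolynomial K) A]
  [IsScalarTower K (LaurentPolynomial K) A]

/-- the inclusion `A → A[t^K]` -/
def iA0 : A →+* AtK K A := Algebra.TensorProduct.includeLeftRingHom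

lemma iA_eq (y : A) : iA K A y = Polynomial.C (iA0 K A y) := rfl

/-- `t^{rep c} ∈ A[t^K]` -/
def eAt (c : QK K) : AtK K A :=
  (1:A) ⊗ₜ[LaurentPolynomial K] (AddMonoidAlgebra.single (rep c) (1:K))

lemma tpow_rep (c : QK K) : tpow K A (rep c) = Polynomial.C (eAt K A c) := rfl

lemma eAt_zero : eAt K A 0 = 1 := by
  rw [eAt, rep_zero, ← AddMonoidAlgebra.one_def, Algebra.TensorProduct.one_def]

lemma iA0_mul_eAt (y : A) (c : QK K) :
    iA0 K A y * eAt K A c = y ⊗ₜ[LaurentPolynomial K] AddMonoidAlgebra.single (rep c) (1:K) := by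
  rw [iA0, Algebra.TensorProduct.includeLeftRingHom_apply, eAt,
    Algebra.TensorProduct.tmul_mul_tmul, mul_one, one_mul]

/-- the `LaurentPolynomial K`-action on `AddMonoidAlgebra K K`, explicitly -/
lemma L_smul_single (m : ℤ) (u : K) (a : K) (v : K) :
    (AddMonoidAlgebra.single m u : LaurentPolynomial K) •
      (AddMonoidAlgebra.single a v : AddMonoidAlgebra K K)
    = AddMonoidAlgebra.single ((m : K) + a) (u * v) := by
  rw [Algebra.smul_def]
  have : algebraMap (LaurentPolynomial K) (AddMonoidAlgebra K K)
      (AddMonoidAlgebra.single m u)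
      = AddMonoidAlgebra.single ((m : K)) u := by
    show AddMonoidAlgebra.mapDomainRingHom K (Int.castAddHom K) (AddMonoidAlgebra.single m u)
      = AddMonoidAlgebra.single ((m : K)) u
    rw [AddMonoidAlgebra.mapDomainRingHom_apply]
    exact AddMonoidAlgebra.mapDomain_single
  rw [this, AddMonoidAlgebra.single_mul_single]

/-- `J : ⊕_{K/ℤ} A → A[t^K]`, `(y)_c ↦ y·t^{rep c}` -/
def Jmap : ((QK K) →₀ A) →+ AtK K A :=
  Finsupp.liftAddHom fun c =>
    ((TensorProduct.mk (LaurentPolynomial K) A (AddMonoidAlgebra K K)).flip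
      (AddMonoidAlgebra.single (rep c) (1:K))).toAddMonoidHom

lemma Jmap_single (c : QK K) (y : A) :
    Jmap K A (Finsupp.single c y)
      = y ⊗ₜ[LaurentPolynomial K] (AddMonoidAlgebra.single (rep c) (1:K)) := by
  rw [Jmap, Finsupp.liftAddHom_apply_single]
  rfl

/-- the bilinear map used to construct the inverse projection -/
def Bmap : A →+ (AddMonoidAlgebra K K) →+ ((QK K) →₀ A) where
  toFun y := (Finsupp.liftAddHom fun a =>
    (Finsupp.singleAddHom (cls a)).comp
      ((AddMonoidHom.mulRight y).comp
        (((algebraMap (LaurentPolynomial K) A : LaurentPolynomial K →+* A).toAddMonoidHom).comp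
          (AddMonoidAlgebra.singleAddHom (num a) : K →+ LaurentPolynomial K)))).comp
      (AddMonoidAlgebra.coeffAddEquiv (R := K) (M := K)).toAddMonoidHom
  map_zero' := by
    refine AddMonoidAlgebra.addMonoidHom_ext fun a v => ?_
    simp [Finsupp.liftAddHom_apply_single, AddMonoidAlgebra.coeff_single]
  map_add' y y' := by
    refine AddMonoidAlgebra.addMonoidHom_ext fun a v => ?_
    simp [Finsupp.liftAddHom_apply_single, mul_add, Finsupp.single_add,
      AddMonoidAlgebra.coeff_single]

lemma Bmap_single (y : A) (a : K) (v : K) :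
    Bmap K A y (AddMonoidAlgebra.single a v)
      = Finsupp.single (cls a)
          (algebraMap (LaurentPolynomial K) A (AddMonoidAlgebra.single (num a) v) * y) := by
  show Finsupp.liftAddHom _ (Finsupp.single a v) = _
  rw [Finsupp.liftAddHom_apply_single]
  rfl

lemma Bmap_compat : ∀ (l : LaurentPolynomial K) (y : A) (f : AddMonoidAlgebra K K),
    Bmap K A (l • y) f = Bmap K A y (l • f) := by
  intro l
  induction l using AddMonoidAlgebra.induction_linear with
  | zero =>
    intro y f
    rw [zero_smul, zero_smul, map_zero, AddMonoidHom.zero_apply, map_zero]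
  | add l1 l2 h1 h2 =>
    intro y f
    rw [add_smul, add_smul, map_add, AddMonoidHom.add_apply, h1, h2, map_add]
  | single m u =>
    intro y f
    induction f using AddMonoidAlgebra.induction_linear with
    | zero => rw [smul_zero, map_zero, map_zero]
    | add f1 f2 h1 h2 => rw [smul_add, map_add, map_add, h1, h2]
    | single a v =>
      show Bmap K A ((AddMonoidAlgebra.single m u : LaurentPolynomial K) • y)
          (AddMonoidAlgebra.single a v)
        = Bmap K A y ((AddMonoidAlgebra.single m u : LaurentPolynomial K) •
            (AddMonoidAlgebra.single a v : AddMonoidAlgebra K K))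
      rw [L_smul_single, Bmap_single, Bmap_single, Algebra.smul_def, ← mul_assoc, ← map_mul,
        AddMonoidAlgebra.single_mul_single, cls_add_int, num_add_int]
      rw [mul_comm v u, add_comm (num a) m]

/-- the projection `A[t^K] → ⊕_{K/ℤ} A` -/
def Pmap : AtK K A →+ ((QK K) →₀ A) :=
  TensorProduct.liftAddHom (Bmap K A) (Bmap_compat K A)

lemma Pmap_Jmap (g : (QK K) →₀ A) : Pmap K A (Jmap K A g) = g := by
  induction g using Finsupp.induction_linear with
  | zero => rw [map_zero, map_zero]
  | add f1 f2 h1 h2 => rw [map_add, map_add, h1, h2]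
  | single c y =>
    rw [Jmap_single, Pmap, TensorProduct.liftAddHom_tmul, Bmap_single, cls_rep, num_rep,
      ← AddMonoidAlgebra.one_def, map_one, one_mul]

lemma Jmap_injective : Function.Injective (Jmap K A) :=
  Function.LeftInverse.injective (Pmap_Jmap K A)

lemma Jmap_surjective : ∀ x : AtK K A, ∃ g, Jmap K A g = x := by
  intro x
  induction x using TensorProduct.induction_on with
  | zero => exact ⟨0, map_zero _⟩
  | add x1 x2 h1 h2 =>
    obtain ⟨g1, hg1⟩ := h1
    obtain ⟨g2, hg2⟩ := h2
    exact ⟨g1 + g2, by rw [map_add, hg1, hg2]⟩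
  | tmul y f =>
    induction f using AddMonoidAlgebra.induction_linear with
    | zero => exact ⟨0, by rw [map_zero, TensorProduct.tmul_zero]⟩
    | add f1 f2 h1 h2 =>
      obtain ⟨g1, hg1⟩ := h1
      obtain ⟨g2, hg2⟩ := h2
      exact ⟨g1 + g2, by rw [map_add, hg1, hg2, TensorProduct.tmul_add]⟩
    | single a v =>
      refine ⟨Finsupp.single (cls a)
        ((AddMonoidAlgebra.single (num a) v : LaurentPolynomial K) • y), ?_⟩
      rw [Jmap_single, TensorProduct.smul_tmul, L_smul_single, mul_one,
        add_comm ((num a : K)) (rep (cls a)), ← num_spec]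

end Main
end Stmt13Aux

set_option maxHeartbeats 1000000
set_option synthInstance.maxHeartbeats 400000

namespace Stmt13Aux

open Polynomial
open scoped TensorProduct

section Main2

variable (K : Type) [Field K] [IsAlgClosed K] [CharZero K]
variable (A : Type) [CommRing A] [Algebra K A] [Algebra (LaurentPolynomial K) A]
  [IsScalarTower K (LaurentPolynomial K) A]

/-- `Ψ : ⊕_{K/ℤ} A[ℓ] → E_A`, `(p_c)_c ↦ Σ p_c(ℓ)·t^{rep c}` -/
def Psi : ((QK K) →₀ Polynomial A) →+ EA K A :=
  Finsupp.liftAddHom fun c =>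
    (AddMonoidHom.mulRight (Polynomial.C (eAt K A c))).comp
      (Polynomial.mapRingHom (iA0 K A)).toAddMonoidHom

lemma Psi_single (c : QK K) (p : Polynomial A) :
    Psi K A (Finsupp.single c p) = p.map (iA0 K A) * Polynomial.C (eAt K A c) := by
  rw [Psi, Finsupp.liftAddHom_apply_single]
  rfl

lemma Psi_coeff (f : (QK K) →₀ Polynomial A) (n : ℕ) :
    (Psi K A f).coeff n
      = Jmap K A (Finsupp.mapRange (fun p => p.coeff n) (Polynomial.coeff_zero n) f) := by
  induction f using Finsupp.induction_linear with
  | zero => simp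
  | add f1 f2 h1 h2 =>
    rw [map_add, coeff_add, h1, h2, Finsupp.mapRange_add (fun a b => Polynomial.coeff_add a b n), map_add]
  | single c p =>
    rw [Psi_single, coeff_mul_C, coeff_map, Finsupp.mapRange_single, Jmap_single,
      ← iA0_mul_eAt]

lemma Psi_injective : Function.Injective (Psi K A) := by
  have h0 : ∀ f, Psi K A f = 0 → f = 0 := by
    intro f hf
    have hn : ∀ n : ℕ, Finsupp.mapRange (fun p : Polynomial A => p.coeff n) (Polynomial.coeff_zero n) f = 0 := by
      intro n
      apply Jmap_injective K A
      rw [← Psi_coeff, hf, map_zero]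
      simp
    ext c n
    have := congrArg (fun g => g c) (hn n)
    rw [Finsupp.mapRange_apply] at this
    simpa using this
  intro f g h
  have : f - g = 0 := h0 _ (by rw [map_sub, h, sub_self])
  rw [← sub_eq_zero]
  exact this

lemma Psi_monomial (n : ℕ) (g : (QK K) →₀ A) :
    Psi K A (Finsupp.mapRange (fun y => Polynomial.C y * Polynomial.X ^ n) (by simp) g)
      = Polynomial.monomial n (Jmap K A g) := by
  induction g using Finsupp.induction_linear with
  | zero => simp
  | add g1 g2 h1 h2 =>
    rw [Finsupp.mapRange_add (by intro a b; rw [map_add, add_mul]), map_add, h1, h2,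
      map_add, map_add]
  | single c y =>
    rw [Finsupp.mapRange_single, Psi_single, Polynomial.map_mul, Polynomial.map_pow,
      Polynomial.map_C, Polynomial.map_X, Jmap_single, ← iA0_mul_eAt,
      mul_right_comm (Polynomial.C (iA0 K A y)) (Polynomial.X ^ n), ← Polynomial.C_mul,
      C_mul_X_pow_eq_monomial]

lemma Psi_surjective : ∀ x : EA K A, ∃ f, Psi K A f = x := by
  intro x
  induction x using Polynomial.induction_on' with
  | add p q hp hq =>
    obtain ⟨f, hf⟩ := hp
    obtain ⟨g, hg⟩ := hq
    exact ⟨f + g, by rw [map_add, hf, hg]⟩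
  | monomial n x0 =>
    obtain ⟨g, hg⟩ := Jmap_surjective K A x0
    exact ⟨_, by rw [Psi_monomial, hg]⟩

/-- the component operator `p ↦ u·p(ℓ+1)` -/
def ScHom (u : K) : Polynomial A →+ Polynomial A where
  toFun p := u • p.comp (Polynomial.X + 1)
  map_zero' := by simp
  map_add' p q := by
    show u • (p + q).comp (Polynomial.X + 1)
        = u • p.comp (Polynomial.X + 1) + u • q.comp (Polynomial.X + 1)
    rw [Polynomial.add_comp, smul_add]

/-- the transported operator `σ` on `⊕_{K/ℤ} A[ℓ]` -/
def Sop (γ : K → Kˣ) : ((QK K) →₀ Polynomial A) →+ ((QK K) →₀ Polynomial A) :=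
  Finsupp.liftAddHom fun c => (Finsupp.singleAddHom c).comp (ScHom K A ((γ (rep c) : K)))

lemma Sop_single (γ : K → Kˣ) (c : QK K) (p : Polynomial A) :
    Sop K A γ (Finsupp.single c p)
      = Finsupp.single c ((γ (rep c) : K) • p.comp (Polynomial.X + 1)) := by
  rw [Sop, Finsupp.liftAddHom_apply_single]
  rfl

lemma Sop_apply (γ : K → Kˣ) (f : (QK K) →₀ Polynomial A) (c : QK K) :
    Sop K A γ f c = (γ (rep c) : K) • (f c).comp (Polynomial.X + 1) := by
  induction f using Finsupp.induction_linear with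
  | zero => simp
  | add f1 f2 h1 h2 =>
    rw [map_add, Finsupp.add_apply, Finsupp.add_apply, h1, h2, Polynomial.add_comp, smul_add]
  | single c' p =>
    rw [Sop_single]
    by_cases h : c' = c
    · subst h
      rw [Finsupp.single_eq_same, Finsupp.single_eq_same]
    · rw [Finsupp.single_eq_of_ne (Ne.symm h), Finsupp.single_eq_of_ne (Ne.symm h), Polynomial.zero_comp,
        smul_zero]

lemma map_iA0_smul (u : K) (q : Polynomial A) :
    (u • q).map (iA0 K A) = u • q.map (iA0 K A) := by
  ext n
  rw [Polynomial.coeff_map, Polynomial.coeff_smul, Polynomial.coeff_smul, Polynomial.coeff_map]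
  show iA0 K A (u • q.coeff n) = u • iA0 K A (q.coeff n)
  rw [iA0, Algebra.TensorProduct.includeLeftRingHom_apply,
    Algebra.TensorProduct.includeLeftRingHom_apply, TensorProduct.smul_tmul']

lemma sigma_map (σ : EA K A ≃+* EA K A) (h1 : ∀ x : A, σ (iA K A x) = iA K A x)
    (h3 : σ (Polynomial.X : EA K A) = Polynomial.X + 1) (p : Polynomial A) :
    σ (p.map (iA0 K A)) = (p.comp (Polynomial.X + 1)).map (iA0 K A) := by
  induction p using Polynomial.induction_on' with
  | add p q hp hq =>
    rw [Polynomial.map_add, map_add, hp, hq, Polynomial.add_comp, Polynomial.map_add]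
  | monomial n a =>
    have hC : σ (Polynomial.C (iA0 K A a)) = Polynomial.C (iA0 K A a) := by
      rw [← iA_eq, h1]
    rw [Polynomial.map_monomial, ← C_mul_X_pow_eq_monomial, map_mul, map_pow, h3, hC,
      Polynomial.monomial_comp, Polynomial.map_mul, Polynomial.map_pow, Polynomial.map_add,
      Polynomial.map_C, Polynomial.map_X, Polynomial.map_one]

lemma sigma_Psi (γ : K → Kˣ) (σ : EA K A ≃+* EA K A) (hσ : SProps γ σ)
    (f : (QK K) →₀ Polynomial A) : σ (Psi K A f) = Psi K A (Sop K A γ f) := by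
  induction f using Finsupp.induction_linear with
  | zero => rw [map_zero (Sop K A γ), map_zero (Psi K A), map_zero σ]
  | add f1 f2 h1 h2 =>
    rw [map_add (Psi K A), map_add σ, h1, h2, map_add (Sop K A γ), map_add (Psi K A)]
  | single c p =>
    rw [Psi_single, Sop_single, Psi_single, map_mul, sigma_map K A σ hσ.1 hσ.2.2 p]
    have h2 : σ (Polynomial.C (eAt K A c)) = (γ (rep c) : K) • Polynomial.C (eAt K A c) := by
      rw [← tpow_rep, hσ.2.1 (rep c), tpow_rep]
    rw [h2, map_iA0_smul, smul_mul_assoc, mul_smul_comm]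

end Main2
end Stmt13Aux


set_option maxHeartbeats 1000000 in
set_option synthInstance.maxHeartbeats 400000 in
/-- On `E_A = A[t^K][ℓ]`, the operator `d_σ = σ − id` is surjective
and its kernel equals `A`. -/
theorem stmt_13 (K : Type) [Field K] [IsAlgClosed K] [CharZero K]
    (A : Type) [CommRing A] [Algebra K A] [Algebra (LaurentPolynomial K) A]
    [IsScalarTower K (LaurentPolynomial K) A]
    (hinj : Function.Injective (algebraMap (LaurentPolynomial K) A))
    (γ : K → Kˣ) (hγ : GammaProps γ)
    (σ : EA K A ≃+* EA K A) (hσ : SProps γ σ) :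
    Function.Surjective (fun x : EA K A => σ x - x) ∧
    (∀ x : EA K A, σ x = x ↔ ∃ y : A, x = iA K A y) := by
  classical
  constructor
  · -- surjectivity of σ - id
    intro z
    obtain ⟨f, hf⟩ := Stmt13Aux.Psi_surjective K A z
    have hex : ∀ f : (Stmt13Aux.QK K) →₀ Polynomial A,
        ∃ g, Stmt13Aux.Sop K A γ g - g = f := by
      intro f
      induction f using Finsupp.induction_linear with
      | zero => exact ⟨0, by rw [map_zero, sub_zero]⟩
      | add f1 f2 h1 h2 =>
        obtain ⟨g1, hg1⟩ := h1
        obtain ⟨g2, hg2⟩ := h2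
        exact ⟨g1 + g2, by rw [map_add, add_sub_add_comm, hg1, hg2]⟩
      | single c p =>
        obtain ⟨p', hp'⟩ := Stmt13Aux.delta_surj (γ (Stmt13Aux.rep c)) p
        exact ⟨Finsupp.single c p', by
          rw [Stmt13Aux.Sop_single, ← Finsupp.single_sub, hp']⟩
    obtain ⟨g, hg⟩ := hex f
    refine ⟨Stmt13Aux.Psi K A g, ?_⟩
    show σ (Stmt13Aux.Psi K A g) - Stmt13Aux.Psi K A g = z
    rw [Stmt13Aux.sigma_Psi K A γ σ hσ, ← map_sub (Stmt13Aux.Psi K A), hg, hf]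
  · -- kernel of σ - id is A
    intro x
    constructor
    · intro hx
      obtain ⟨f, hf⟩ := Stmt13Aux.Psi_surjective K A x
      have hS : Stmt13Aux.Sop K A γ f = f := by
        apply Stmt13Aux.Psi_injective K A
        rw [← Stmt13Aux.sigma_Psi K A γ σ hσ, hf, hx]
      have hc : ∀ c, (γ (Stmt13Aux.rep c) : K) • (f c).comp (Polynomial.X + 1) = f c := by
        intro c
        rw [← Stmt13Aux.Sop_apply, hS]
      have hγ0 : (γ (Stmt13Aux.rep (0 : Stmt13Aux.QK K)) : K) = 1 := by
        rw [Stmt13Aux.rep_zero]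
        have h01 : γ (0:K) = 1 := (hγ.2 0).mpr ⟨0, by simp⟩
        rw [h01, Units.val_one]
      have h0 := hc 0
      rw [hγ0, one_smul] at h0
      obtain ⟨y, hy⟩ := Stmt13Aux.delta_ker_one K h0
      have hne : ∀ c : Stmt13Aux.QK K, c ≠ 0 → f c = 0 := by
        intro c hcne
        refine Stmt13Aux.delta_ker_ne_one (K := K) ?_ (hc c)
        intro h1
        apply hcne
        have hu1 : γ (Stmt13Aux.rep c) = 1 := Units.ext (by simpa using h1)
        obtain ⟨n, hn⟩ := (hγ.2 _).mp hu1
        rw [← Stmt13Aux.cls_rep c, ← hn, Stmt13Aux.cls_intCast]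
      have hfs : f = Finsupp.single 0 (Polynomial.C y) := by
        ext c
        by_cases h : c = 0
        · subst h
          rw [Finsupp.single_eq_same, ← hy]
        · rw [Finsupp.single_eq_of_ne h, hne c h]
      refine ⟨y, ?_⟩
      rw [← hf, hfs, Stmt13Aux.Psi_single, Polynomial.map_C, Stmt13Aux.eAt_zero, map_one,
        mul_one, ← Stmt13Aux.iA_eq]
    · rintro ⟨y, rfl⟩
      exact hσ.1 y


end
end

section
/- If A is a differential K-algebra without exponents nor logarithm, then for every K-linear representation V of ℤ, the kernel of 1⊗∂ on V ⊗_K E_A equals V; and for every differential module M over A that is free as an A-module, the fixed points of 1⊗σ on M ⊗_A E_A equal M. -/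
set_option synthInstance.maxHeartbeats 1000000
set_option maxHeartbeats 1000000

open scoped TensorProduct
open Polynomial

noncomputable section

variable (K : Type) [Field K] [IsAlgClosed K] [CharZero K]
variable (A : Type) [CommRing A] [Algebra K A] [Algebra (LaurentPolynomial K) A]
  [IsScalarTower K (LaurentPolynomial K) A]

variable {K A}

set_option linter.unusedSectionVars false
set_option linter.unusedVariables false

section Stmt16Aux
variable (K A)

namespace Stmt16


def Zsub : AddSubgroup K := (Int.castAddHom K).range
abbrev Io := K ⧸ Zsub K

variable {K}

lemma mem_Zsub_iff (a : K) : a ∈ Zsub K ↔ ∃ n : ℤ, (n : K) = a := by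
  constructor
  · rintro ⟨n, rfl⟩; exact ⟨n, rfl⟩
  · rintro ⟨n, rfl⟩; exact ⟨n, rfl⟩

open scoped Classical in
def sec (c : Io K) : K := if c = 0 then 0 else Quotient.out c

lemma mk_sec (c : Io K) : ((sec c : K) : Io K) = c := by
  classical
  unfold sec
  split
  · next h => rw [h]; rfl
  · exact QuotientAddGroup.out_eq' c

lemma sec_zero : sec (0 : Io K) = 0 := by
  classical
  unfold sec
  simp

lemma sec_not_int {c : Io K} (h : c ≠ 0) : ¬ ∃ n : ℤ, (n : K) = sec c := by
  intro hn
  apply h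
  rw [← mk_sec c]
  exact (QuotientAddGroup.eq_zero_iff _).mpr ((mem_Zsub_iff _).mpr hn)

lemma exists_na (a : K) : ∃ n : ℤ, (n : K) = a - sec ((a : Io K)) := by
  have h : ((sec ((a:Io K)) : K) : Io K) = (a : Io K) := mk_sec _
  have := (QuotientAddGroup.eq (s := Zsub K)).mp h
  rcases (mem_Zsub_iff _).mp this with ⟨n, hn⟩
  exact ⟨n, by rw [hn]; ring⟩

def na (a : K) : ℤ := (exists_na a).choose

lemma na_spec (a : K) : ((na a : ℤ) : K) = a - sec ((a : Io K)) := (exists_na a).choose_spec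

lemma na_add_sec (a : K) : ((na a : ℤ) : K) + sec ((a : Io K)) = a := by
  rw [na_spec]; ring

lemma na_sec (c : Io K) : na (sec c) = 0 := by
  have h := na_spec (sec c)
  rw [mk_sec c, sub_self] at h
  exact_mod_cast h

lemma mk_int_add (m : ℤ) (a : K) : (((m : K) + a : K) : Io K) = (a : Io K) := by
  rw [QuotientAddGroup.eq]
  exact (mem_Zsub_iff _).mpr ⟨-m, by push_cast; ring⟩

lemma na_int_add (m : ℤ) (a : K) : na ((m : K) + a) = m + na a := by
  have h1 := na_spec ((m:K) + a)
  rw [mk_int_add m a] at h1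
  have h2 := na_spec a
  have : ((na ((m:K)+a) : ℤ) : K) = ((m + na a : ℤ) : K) := by push_cast at h1 h2 ⊢; rw [h1, h2]; ring
  exact_mod_cast this

-- units
def uT : Aˣ :=
  Units.map (algebraMap (LaurentPolynomial K) A : LaurentPolynomial K →* A)
    (LaurentPolynomial.isUnit_T (R := K) 1).unit

variable (K) in
lemma uTL_val_zpow (n : ℤ) :
    (((LaurentPolynomial.isUnit_T (R := K) 1).unit ^ n : (LaurentPolynomial K)ˣ) : LaurentPolynomial K)
      = LaurentPolynomial.T n := by
  have hval : ((LaurentPolynomial.isUnit_T (R := K) 1).unit : LaurentPolynomial K) = LaurentPolynomial.T 1 :=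
    IsUnit.unit_spec _
  have hpow : ∀ m : ℕ, (((LaurentPolynomial.isUnit_T (R := K) 1).unit ^ m : (LaurentPolynomial K)ˣ) : LaurentPolynomial K) = LaurentPolynomial.T m := by
    intro m
    induction m with
    | zero => simp
    | succ k ih =>
        rw [pow_succ, Units.val_mul, ih, hval, ← LaurentPolynomial.T_add]
        norm_num
  cases n with
  | ofNat m => simpa using hpow m
  | negSucc m =>
      rw [zpow_negSucc]
      have h1 : (((LaurentPolynomial.isUnit_T (R := K) 1).unit ^ (m+1))⁻¹ : (LaurentPolynomial K)ˣ).val *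
          (((LaurentPolynomial.isUnit_T (R := K) 1).unit ^ (m+1) : (LaurentPolynomial K)ˣ) : LaurentPolynomial K) = 1 := by
        rw [← Units.val_mul, inv_mul_cancel]; rfl
      rw [hpow] at h1
      have h2 : LaurentPolynomial.T (R := K) (Int.negSucc m) * LaurentPolynomial.T ((m+1 : ℕ) : ℤ) = 1 := by
        rw [← LaurentPolynomial.T_add, show Int.negSucc m + ((m+1 : ℕ) : ℤ) = 0 by push_cast [Int.negSucc_eq]; ring,
          LaurentPolynomial.T_zero]
      calc (((LaurentPolynomial.isUnit_T (R := K) 1).unit ^ (m+1))⁻¹ : (LaurentPolynomial K)ˣ).val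
          = (((LaurentPolynomial.isUnit_T (R := K) 1).unit ^ (m+1))⁻¹ : (LaurentPolynomial K)ˣ).val *
            (LaurentPolynomial.T ((m+1:ℕ):ℤ) * LaurentPolynomial.T (R := K) (Int.negSucc m)) := by
            rw [mul_comm (LaurentPolynomial.T _), h2, mul_one]
        _ = LaurentPolynomial.T (Int.negSucc m) := by rw [← mul_assoc, h1, one_mul]

def uTz (n : ℤ) : A := ((uT (K := K) (A := A)) ^ n : Aˣ)

lemma algebraMap_T (n : ℤ) : algebraMap (LaurentPolynomial K) A (LaurentPolynomial.T n) = uTz (K := K) A n := by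
  rw [uTz, uT, ← map_zpow]
  simp only [Units.coe_map, MonoidHom.coe_coe]
  rw [uTL_val_zpow]

lemma uTz_add (m n : ℤ) : uTz (K := K) A (m + n) = uTz (K := K) A m * uTz (K := K) A n := by
  rw [uTz, uTz, uTz, zpow_add, Units.val_mul]

lemma uTz_zero : uTz (K := K) A 0 = 1 := by rw [uTz]; simp

lemma algebraMap_single (n : ℤ) (k : K) :
    algebraMap (LaurentPolynomial K) A (AddMonoidAlgebra.single n k) = algebraMap K A k * uTz (K := K) A n := by
  rw [show (AddMonoidAlgebra.single n k : LaurentPolynomial K) = LaurentPolynomial.C k * LaurentPolynomial.T n from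
    LaurentPolynomial.single_eq_C_mul_T k n]
  rw [map_mul, algebraMap_T]
  congr 1
  rw [show (LaurentPolynomial.C : K →+* LaurentPolynomial K) k = algebraMap K (LaurentPolynomial K) k from rfl]
  rw [← IsScalarTower.algebraMap_apply]


section Decomp

-- the additive map `K[t^K] →+ (Io K →₀ A)`
def g0 : AddMonoidAlgebra K K →+ (Io K →₀ A) :=
  (Finsupp.liftAddHom fun (a : K) => AddMonoidHom.mk'
    (fun (k : K) => Finsupp.single ((a : Io K)) (algebraMap K A k * uTz (K := K) A (na a)))
    (fun k1 k2 => by simp [map_add, add_mul, Finsupp.single_add])).comp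
    AddMonoidAlgebra.coeffAddEquiv.toAddMonoidHom

lemma g0_single (a k : K) :
    g0 A (AddMonoidAlgebra.single a k)
      = Finsupp.single ((a : Io K)) (algebraMap K A k * uTz (K := K) A (na a)) := by
  unfold g0
  exact Finsupp.liftAddHom_apply_single _ _ _

lemma smul_AddMonoidAlgebra (l : LaurentPolynomial K) (f : AddMonoidAlgebra K K) :
    l • f = AddMonoidAlgebra.mapDomainRingHom K (Int.castAddHom K) l * f := by
  rw [Algebra.smul_def]
  rfl

lemma smul_single_single (m : ℤ) (c : K) (a k : K) :
    (AddMonoidAlgebra.single m c : LaurentPolynomial K) • (AddMonoidAlgebra.single a k : AddMonoidAlgebra K K)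
      = AddMonoidAlgebra.single ((m : K) + a) (c * k) := by
  rw [smul_AddMonoidAlgebra]
  have : AddMonoidAlgebra.mapDomainRingHom K (Int.castAddHom K) (AddMonoidAlgebra.single m c)
      = AddMonoidAlgebra.single ((m : K)) c := by
    exact AddMonoidAlgebra.mapDomain_single
  rw [this, AddMonoidAlgebra.single_mul_single]

lemma smul_A (l : LaurentPolynomial K) (x : A) :
    l • x = algebraMap (LaurentPolynomial K) A l * x := Algebra.smul_def l x

lemma g0_smul_single (m : ℤ) (c : K) (f : AddMonoidAlgebra K K) :
    g0 A ((AddMonoidAlgebra.single m c : LaurentPolynomial K) • f)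
      = (AddMonoidAlgebra.single m c : LaurentPolynomial K) • g0 A f := by
  induction f using AddMonoidAlgebra.induction with
  | zero => rw [smul_zero, map_zero, smul_zero]
  | single_add a k f ha' hk ihf =>
      rw [smul_add, map_add, map_add, smul_add, ihf]
      congr 1
      rw [show (AddMonoidAlgebra.single m c : LaurentPolynomial K) • (AddMonoidAlgebra.single a k : AddMonoidAlgebra K K)
          = AddMonoidAlgebra.single ((m : K) + a) (c * k) from smul_single_single m c a k]
      rw [g0_single, g0_single, Finsupp.smul_single]
      rw [mk_int_add, na_int_add]
      congr 1
      rw [smul_A, algebraMap_single, map_mul, uTz_add]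
      ring

lemma g0_smul (l : LaurentPolynomial K) (f : AddMonoidAlgebra K K) :
    g0 A (l • f) = l • g0 A f := by
  induction l using AddMonoidAlgebra.induction with
  | zero => rw [zero_smul, zero_smul, map_zero]
  | single_add m c l hm hc ih =>
      rw [add_smul, add_smul, map_add, ih, g0_smul_single]

variable (K) in
def g0L : AddMonoidAlgebra K K →ₗ[LaurentPolynomial K] (Io K →₀ A) where
  toFun := g0 A
  map_add' := (g0 A).map_add
  map_smul' := fun l f => by simpa using g0_smul (A := A) l f

variable (K) in
def Bb : A →ₗ[LaurentPolynomial K]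
    (AddMonoidAlgebra K K) →ₗ[LaurentPolynomial K] (Io K →₀ A) :=
  LinearMap.mk₂ (LaurentPolynomial K) (fun x f => x • g0L K A f)
    (fun x y f => by beta_reduce; rw [add_smul])
    (fun l x f => by beta_reduce; rw [smul_assoc])
    (fun x f g => by beta_reduce; rw [map_add, smul_add])
    (fun l x f => by beta_reduce; rw [map_smul]; exact smul_comm _ _ _)

variable (K) in
def Phi : AtK K A →ₗ[LaurentPolynomial K] (Io K →₀ A) := TensorProduct.lift (Bb K A)

lemma Phi_tmul (x : A) (a k : K) :
    Phi K A (x ⊗ₜ[LaurentPolynomial K] AddMonoidAlgebra.single a k)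
      = Finsupp.single ((a : Io K)) (x * (algebraMap K A k * uTz (K := K) A (na a))) := by
  unfold Phi Bb
  rw [TensorProduct.lift.tmul]
  simp only [LinearMap.mk₂_apply]
  rw [show g0L K A (AddMonoidAlgebra.single a k) = g0 A (AddMonoidAlgebra.single a k) from rfl,
    g0_single, Finsupp.smul_single, smul_eq_mul]

variable (K) in
def Psi : (Io K →₀ A) →+ AtK K A :=
  Finsupp.liftAddHom fun c => AddMonoidHom.mk'
    (fun x => x ⊗ₜ[LaurentPolynomial K] AddMonoidAlgebra.single (sec c) 1)
    (fun x y => TensorProduct.add_tmul _ _ _)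

lemma Psi_single (c : Io K) (x : A) :
    Psi K A (Finsupp.single c x) = x ⊗ₜ[LaurentPolynomial K] AddMonoidAlgebra.single (sec c) 1 := by
  unfold Psi
  exact Finsupp.liftAddHom_apply_single _ _ _

lemma tmul_shift (x : A) (b : K) (n : ℤ) (k : K) :
    (algebraMap K A k * uTz (K := K) A n * x) ⊗ₜ[LaurentPolynomial K]
      (AddMonoidAlgebra.single b 1 : AddMonoidAlgebra K K)
    = x ⊗ₜ[LaurentPolynomial K] (AddMonoidAlgebra.single ((n : K) + b) k : AddMonoidAlgebra K K) := by
  have h1 : algebraMap K A k * uTz (K := K) A n * x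
      = (AddMonoidAlgebra.single n k : LaurentPolynomial K) • x := by
    rw [smul_A, algebraMap_single]
  rw [h1, TensorProduct.smul_tmul]
  congr 1
  rw [smul_single_single, mul_one]

lemma key_repr (x : A) (a k : K) :
    x ⊗ₜ[LaurentPolynomial K] (AddMonoidAlgebra.single a k : AddMonoidAlgebra K K)
      = (algebraMap K A k * uTz (K := K) A (na a) * x) ⊗ₜ[LaurentPolynomial K]
        (AddMonoidAlgebra.single (sec ((a : Io K))) 1 : AddMonoidAlgebra K K) := by
  rw [tmul_shift, na_add_sec]

-- induction principle for AtK
lemma AtK_induction (p : AtK K A → Prop) (h0 : p 0) (hadd : ∀ u v, p u → p v → p (u + v))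
    (hgen : ∀ (x : A) (a k : K), p (x ⊗ₜ[LaurentPolynomial K] AddMonoidAlgebra.single a k)) :
    ∀ y, p y := by
  intro y
  induction y using TensorProduct.induction_on with
  | zero => exact h0
  | tmul x f =>
      induction f using AddMonoidAlgebra.induction with
      | zero => rw [TensorProduct.tmul_zero]; exact h0
      | single_add a k f ha' hk ih =>
          rw [TensorProduct.tmul_add]
          exact hadd _ _ (hgen x a k) ih
  | add u v hu hv => exact hadd u v hu hv

lemma Psi_Phi (y : AtK K A) : Psi K A (Phi K A y) = y := by
  induction y using AtK_induction with
  | h0 => rw [map_zero, map_zero]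
  | hadd u v hu hv => rw [map_add, map_add, hu, hv]
  | hgen x a k =>
      rw [Phi_tmul, Psi_single, key_repr (A := A) x a k]
      congr 1
      ring

lemma Phi_Psi (f : Io K →₀ A) : Phi K A (Psi K A f) = f := by
  induction f using Finsupp.induction with
  | zero => rw [map_zero, map_zero]
  | single_add c x f hc hx ih =>
      rw [map_add, map_add, ih, Psi_single, Phi_tmul, na_sec, mk_sec, uTz_zero, map_one]
      simp

lemma Phi_includeLeft (x : A) :
    Phi K A (x ⊗ₜ[LaurentPolynomial K] 1) = Finsupp.single 0 x := by
  rw [show (1 : AddMonoidAlgebra K K) = AddMonoidAlgebra.single 0 1 from rfl, Phi_tmul]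
  have h0 : ((0 : K) : Io K) = (0 : Io K) := rfl
  rw [h0]
  have : na (0 : K) = 0 := by
    have h := na_spec (0 : K)
    rw [h0, sec_zero, sub_self] at h
    exact_mod_cast h
  rw [this, uTz_zero, map_one]
  simp

lemma Phi_inj : Function.Injective (Phi K A) :=
  Function.LeftInverse.injective (g := Psi K A) (Psi_Phi (A := A))

lemma Psi_inj : Function.Injective (Psi K A) :=
  Function.LeftInverse.injective (g := Phi K A) (Phi_Psi (A := A))

end Decomp

section Ops

variable (dA : Derivation ℤ A A) (γ : K → Kˣ)

def Dop : (Io K →₀ A) →+ (Io K →₀ A) :=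
  Finsupp.liftAddHom fun c => AddMonoidHom.mk'
    (fun x => Finsupp.single c (dA x + sec c • x))
    (fun x y => by beta_reduce; rw [map_add, smul_add, ← Finsupp.single_add]; congr 1; abel)

lemma Dop_single (c : Io K) (x : A) :
    Dop (A := A) dA (Finsupp.single c x) = Finsupp.single c (dA x + sec c • x) := by
  unfold Dop
  exact Finsupp.liftAddHom_apply_single _ _ _

lemma Dop_apply (f : Io K →₀ A) (c : Io K) :
    Dop (A := A) dA f c = dA (f c) + sec c • f c := by
  induction f using Finsupp.induction with
  | zero => simp
  | single_add c' x f hc hx ih =>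
      rw [map_add, Finsupp.add_apply, Finsupp.add_apply, ih, Dop_single]
      by_cases h : c' = c
      · subst h
        simp only [Finsupp.single_eq_same]
        rw [map_add, smul_add]; abel
      · simp only [Finsupp.single_eq_of_ne' h]
        simp

def Sop : (Io K →₀ A) →+ (Io K →₀ A) :=
  Finsupp.liftAddHom fun c => AddMonoidHom.mk'
    (fun x => Finsupp.single c (((γ (sec c) : K)) • x))
    (fun x y => by beta_reduce; rw [smul_add, ← Finsupp.single_add])

lemma Sop_single (c : Io K) (x : A) :
    Sop (A := A) γ (Finsupp.single c x) = Finsupp.single c (((γ (sec c) : K)) • x) := by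
  unfold Sop
  exact Finsupp.liftAddHom_apply_single _ _ _

lemma Sop_apply (f : Io K →₀ A) (c : Io K) :
    Sop (A := A) γ f c = ((γ (sec c) : K)) • f c := by
  induction f using Finsupp.induction with
  | zero => simp
  | single_add c' x f hc hx ih =>
      rw [map_add, Finsupp.add_apply, Finsupp.add_apply, ih, Sop_single]
      by_cases h : c' = c
      · subst h
        simp only [Finsupp.single_eq_same]
        rw [smul_add]
      · simp only [Finsupp.single_eq_of_ne' h]
        simp

variable (K) in
def dApr (dA : Derivation ℤ A A) : AtK K A →+ AtK K A :=
  (Psi K A).comp ((Dop (A := A) dA).comp (Phi K A).toAddMonoidHom)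

variable (K) in
def sPr (γ : K → Kˣ) : AtK K A →+ AtK K A :=
  (Psi K A).comp ((Sop (A := A) γ).comp (Phi K A).toAddMonoidHom)

lemma Phi_dApr (y : AtK K A) : Phi K A (dApr K A dA y) = Dop (A := A) dA (Phi K A y) := by
  unfold dApr
  simp only [AddMonoidHom.coe_comp, Function.comp_apply, LinearMap.toAddMonoidHom_coe]
  rw [Phi_Psi]

lemma Phi_sPr (y : AtK K A) : Phi K A (sPr K A γ y) = Sop (A := A) γ (Phi K A y) := by
  unfold sPr
  simp only [AddMonoidHom.coe_comp, Function.comp_apply, LinearMap.toAddMonoidHom_coe]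
  rw [Phi_Psi]

lemma dApr_tmul_sec (z : A) (c : Io K) :
    dApr K A dA (z ⊗ₜ[LaurentPolynomial K] AddMonoidAlgebra.single (sec c) 1)
      = (dA z + sec c • z) ⊗ₜ[LaurentPolynomial K] AddMonoidAlgebra.single (sec c) 1 := by
  unfold dApr
  simp only [AddMonoidHom.coe_comp, Function.comp_apply, LinearMap.toAddMonoidHom_coe]
  rw [Phi_tmul, na_sec, mk_sec, uTz_zero, map_one, one_mul, mul_one, Dop_single, Psi_single]

lemma sPr_tmul_sec (z : A) (c : Io K) :
    sPr K A γ (z ⊗ₜ[LaurentPolynomial K] AddMonoidAlgebra.single (sec c) 1)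
      = (((γ (sec c) : K)) • z) ⊗ₜ[LaurentPolynomial K] AddMonoidAlgebra.single (sec c) 1 := by
  unfold sPr
  simp only [AddMonoidHom.coe_comp, Function.comp_apply, LinearMap.toAddMonoidHom_coe]
  rw [Phi_tmul, na_sec, mk_sec, uTz_zero, map_one, one_mul, mul_one, Sop_single, Psi_single]

end Ops

section Ker

variable {dA : Derivation ℤ A A} {γ : K → Kˣ}

lemma nontrivA (hinj : Function.Injective (algebraMap (LaurentPolynomial K) A)) : Nontrivial A :=
  ⟨⟨0, 1, fun h => zero_ne_one (α := LaurentPolynomial K) (hinj (by rw [map_zero, map_one, h]))⟩⟩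

lemma algKAtK (c : K) :
    algebraMap K (AtK K A) c = (algebraMap K A c) ⊗ₜ[LaurentPolynomial K] 1 := by
  with_unfolding_all rfl

lemma one_AMA : (1 : AddMonoidAlgebra K K) = AddMonoidAlgebra.single 0 1 := rfl

lemma ker_dApr (hNoExpLog : NoExpLog (K := K) dA) (y : AtK K A)
    (h : dApr K A dA y = 0) : ∃ c : K, y = algebraMap K (AtK K A) c := by
  have hf : Dop (A := A) dA (Phi K A y) = 0 := by
    rw [← Phi_dApr, h, map_zero]
  set f := Phi K A y with hfdef
  have hcomp : ∀ c : Io K, dA (f c) + sec c • f c = 0 := by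
    intro c
    rw [← Dop_apply, hf, Finsupp.coe_zero, Pi.zero_apply]
  have hne : ∀ c : Io K, c ≠ 0 → f c = 0 := by
    intro c hc
    exact hNoExpLog.2 (sec c) (sec_not_int hc) (f c) (hcomp c)
  have h0 : dA (f 0) = 0 := by
    have := hcomp 0
    rwa [sec_zero, zero_smul, add_zero] at this
  obtain ⟨c', hc'⟩ := (hNoExpLog.1 (f 0)).mp (by rw [h0, map_zero])
  refine ⟨c', ?_⟩
  have hfs : f = Finsupp.single 0 (algebraMap K A c') := by
    ext c
    by_cases h : c = 0
    · subst h; rw [Finsupp.single_eq_same, hc']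
    · rw [Finsupp.single_eq_of_ne h, hne c h]
  calc y = Psi K A (Phi K A y) := (Psi_Phi (A := A) y).symm
    _ = Psi K A (Finsupp.single 0 (algebraMap K A c')) := by rw [← hfdef, hfs]
    _ = algebraMap K (AtK K A) c' := by
        rw [Psi_single, sec_zero, algKAtK, one_AMA]

lemma dApr_const_zero (hdA : ExtendsTddt (K := K) dA) (hNoExpLog : NoExpLog (K := K) dA)
    (hinj : Function.Injective (algebraMap (LaurentPolynomial K) A))
    (y : AtK K A) (c : K) (h : dApr K A dA y = algebraMap K (AtK K A) c) : c = 0 := by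
  haveI := nontrivA (A := A) hinj
  have hf : Dop (A := A) dA (Phi K A y) = Finsupp.single 0 (algebraMap K A c) := by
    rw [← Phi_dApr, h, algKAtK, Phi_includeLeft]
  have h0 : dA (Phi K A y 0) + sec (0 : Io K) • (Phi K A y 0) = algebraMap K A c := by
    rw [← Dop_apply, hf, Finsupp.single_eq_same]
  rw [sec_zero, zero_smul, add_zero] at h0
  have hdd : dA (dA (Phi K A y 0)) = 0 := by rw [h0, hdA.1]
  obtain ⟨c'', hc''⟩ := (hNoExpLog.1 _).mp hdd
  rw [hc'', hdA.1] at h0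
  have : algebraMap K A c = 0 := h0.symm
  have hKA : Function.Injective (algebraMap K A) := RingHom.injective _
  exact hKA (by rw [this, map_zero])

lemma ksmul_cancel {c : K} (hc : c ≠ 0) {x : A} (h : c • x = 0) : x = 0 := by
  have : x = (c⁻¹ * c) • x := by rw [inv_mul_cancel₀ hc, one_smul]
  rw [this, mul_smul, h, smul_zero]

lemma fix_sPr (hγ : GammaProps γ) (y : AtK K A) (h : sPr K A γ y = y) :
    ∃ x : A, y = x ⊗ₜ[LaurentPolynomial K] 1 := by
  have hf : Sop (A := A) γ (Phi K A y) = Phi K A y := by rw [← Phi_sPr, h]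
  set f := Phi K A y with hfdef
  have hcomp : ∀ c : Io K, ((γ (sec c) : K)) • f c = f c := by
    intro c
    rw [← Sop_apply, hf]
  have hne : ∀ c : Io K, c ≠ 0 → f c = 0 := by
    intro c hc
    have hne1 : γ (sec c) ≠ 1 := by
      intro heq
      exact sec_not_int hc ((hγ.2 (sec c)).mp heq)
    have hval : ((γ (sec c) : K)) - 1 ≠ 0 := by
      intro heq
      apply hne1
      apply Units.ext
      rw [Units.val_one]
      exact sub_eq_zero.mp heq
    apply ksmul_cancel (A := A) hval
    rw [sub_smul, one_smul, hcomp c, sub_self]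
  refine ⟨f 0, ?_⟩
  have hfs : f = Finsupp.single 0 (f 0) := by
    ext c
    by_cases h : c = 0
    · subst h; rw [Finsupp.single_eq_same]
    · rw [Finsupp.single_eq_of_ne h, hne c h]
  conv_lhs => rw [← Psi_Phi (A := A) y, ← hfdef, hfs]
  rw [Psi_single, sec_zero, one_AMA]

lemma sPr_sub_const (hγ : GammaProps γ) (y : AtK K A) (x0 : A)
    (h : sPr K A γ y - y = x0 ⊗ₜ[LaurentPolynomial K] 1) : x0 = 0 := by
  have hγ0 : (γ (0 : K) : K) = 1 := by
    have : γ (0 : K) = 1 := (hγ.2 0).mpr ⟨0, by simp⟩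
    rw [this, Units.val_one]
  have hf : Sop (A := A) γ (Phi K A y) - Phi K A y = Finsupp.single 0 x0 := by
    rw [← Phi_sPr, ← map_sub, h, Phi_includeLeft]
  have h0 := congrArg (fun g => g (0 : Io K)) hf
  simp only [Finsupp.sub_apply, Finsupp.single_eq_same] at h0
  rw [Sop_apply, sec_zero, hγ0, one_smul, sub_self] at h0
  exact h0.symm

end Ker

section EAlevel

variable {dA : Derivation ℤ A A} {γ : K → Kˣ}
variable {D : Derivation ℤ (EA K A) (EA K A)} {σ : EA K A ≃+* EA K A}

lemma iA_eq (z : A) : iA K A z = Polynomial.C (z ⊗ₜ[LaurentPolynomial K] 1) := by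
  simp [iA, Algebra.TensorProduct.includeLeftRingHom_apply]

lemma C_tmul_single (z : A) (b : K) :
    (Polynomial.C (z ⊗ₜ[LaurentPolynomial K] AddMonoidAlgebra.single b 1) : EA K A)
      = iA K A z * tpow K A b := by
  rw [iA_eq, tpow, ← map_mul, Algebra.TensorProduct.tmul_mul_tmul, mul_one, one_mul]

lemma D_C_basic (hD : DProps (K := K) dA D) (z : A) (b : K) :
    D (Polynomial.C (z ⊗ₜ[LaurentPolynomial K] AddMonoidAlgebra.single b 1))
      = Polynomial.C ((dA z + b • z) ⊗ₜ[LaurentPolynomial K] AddMonoidAlgebra.single b 1) := by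
  rw [C_tmul_single, Derivation.leibniz, hD.1, hD.2.1]
  rw [smul_eq_mul, smul_eq_mul]
  rw [iA_eq, iA_eq, show tpow K A b = Polynomial.C ((1:A) ⊗ₜ[LaurentPolynomial K] AddMonoidAlgebra.single b 1) from rfl]
  rw [Polynomial.smul_C, ← map_mul, ← map_mul, ← map_add]
  congr 1
  simp only [TensorProduct.smul_tmul', Algebra.TensorProduct.tmul_mul_tmul, one_mul, mul_one,
    mul_smul_comm]
  rw [TensorProduct.add_tmul]
  abel

lemma S_C_basic (hσ : SProps (K := K) γ σ) (z : A) (b : K) :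
    σ (Polynomial.C (z ⊗ₜ[LaurentPolynomial K] AddMonoidAlgebra.single b 1))
      = Polynomial.C ((((γ b : K)) • z) ⊗ₜ[LaurentPolynomial K] AddMonoidAlgebra.single b 1) := by
  rw [C_tmul_single, map_mul, hσ.1, hσ.2.1]
  rw [iA_eq, show tpow K A b = Polynomial.C ((1:A) ⊗ₜ[LaurentPolynomial K] AddMonoidAlgebra.single b 1) from rfl]
  rw [Polynomial.smul_C, ← map_mul]
  congr 1
  simp only [TensorProduct.smul_tmul', Algebra.TensorProduct.tmul_mul_tmul, one_mul, mul_one,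
    mul_smul_comm]

lemma D_C (hD : DProps (K := K) dA D) (y : AtK K A) :
    D (Polynomial.C y) = Polynomial.C (dApr K A dA y) := by
  induction y using AtK_induction with
  | h0 => simp only [map_zero]
  | hadd u v hu hv => rw [map_add, map_add, map_add, map_add, hu, hv]
  | hgen x a k =>
      rw [key_repr (A := A) x a k, D_C_basic (A := A) hD, dApr_tmul_sec]

lemma S_C (hσ : SProps (K := K) γ σ) (y : AtK K A) :
    σ (Polynomial.C y) = Polynomial.C (sPr K A γ y) := by
  induction y using AtK_induction with
  | h0 => simp only [map_zero]
  | hadd u v hu hv => rw [map_add, map_add, map_add, map_add, hu, hv]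
  | hgen x a k =>
      rw [key_repr (A := A) x a k, S_C_basic (A := A) hσ, sPr_tmul_sec]

lemma D_coeff (hD : DProps (K := K) dA D) (P : EA K A) (j : ℕ) :
    (D P).coeff j = dApr K A dA (P.coeff j) + (j+1) • P.coeff (j+1) := by
  induction P using Polynomial.induction_on' with
  | add p q hp hq =>
      rw [map_add, Polynomial.coeff_add, Polynomial.coeff_add, Polynomial.coeff_add,
        map_add, hp, hq, smul_add]
      abel
  | monomial n y =>
      rw [← Polynomial.C_mul_X_pow_eq_monomial]
      rw [Derivation.leibniz, Derivation.leibniz_pow, hD.2.2, D_C (A := A) hD]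
      simp only [smul_eq_mul, mul_one]
      rw [mul_smul_comm, mul_comm (Polynomial.X (R := AtK K A) ^ n)]
      simp only [Polynomial.coeff_add, Polynomial.coeff_smul, Polynomial.coeff_C_mul,
        Polynomial.coeff_X_pow, mul_ite, mul_one, mul_zero, smul_ite, smul_zero,
        apply_ite (dApr K A dA), map_zero]
      split_ifs with h1 h2 h3 <;> try omega
      · obtain rfl : n = 0 := by omega
        simp
      · obtain rfl : n = j + 1 := by omega
        simp
      · simp
      · simp

lemma S_monomial (hσ : SProps (K := K) γ σ) (n : ℕ) (y : AtK K A) :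
    σ ((Polynomial.monomial n) y) = Polynomial.C (sPr K A γ y) * (Polynomial.X + 1)^n := by
  rw [← Polynomial.C_mul_X_pow_eq_monomial, map_mul, map_pow, S_C (A := A) hσ, hσ.2.2]

lemma S_coeff_top (hσ : SProps (K := K) γ σ) (P : EA K A) (m : ℕ) (hdeg : P.natDegree ≤ m + 1) :
    (σ P).coeff (m+1) = sPr K A γ (P.coeff (m+1)) ∧
    (σ P).coeff m = sPr K A γ (P.coeff m) + (m+1) • sPr K A γ (P.coeff (m+1)) := by
  have hσP : σ P = ∑ i ∈ Finset.range (m+2), Polynomial.C (sPr K A γ (P.coeff i)) * (Polynomial.X + 1)^i := by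
    conv_lhs => rw [Polynomial.as_sum_range' P (m+2) (by omega)]
    rw [map_sum]
    exact Finset.sum_congr rfl fun i _ => S_monomial (A := A) hσ i _
  constructor
  · rw [hσP, Polynomial.finset_sum_coeff]
    rw [Finset.sum_eq_single (m+1)]
    · rw [Polynomial.coeff_C_mul, Polynomial.coeff_X_add_one_pow, Nat.choose_self,
        Nat.cast_one, mul_one]
    · intro i hi hne
      rw [Polynomial.coeff_C_mul, Polynomial.coeff_X_add_one_pow,
        Nat.choose_eq_zero_of_lt (by simp at hi; omega), Nat.cast_zero, mul_zero]
    · intro h; exact absurd (Finset.self_mem_range_succ (m+1)) h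
  · rw [hσP, Polynomial.finset_sum_coeff]
    rw [Finset.sum_range_succ, Finset.sum_range_succ]
    rw [Finset.sum_eq_zero (fun i hi => by
      rw [Polynomial.coeff_C_mul, Polynomial.coeff_X_add_one_pow,
        Nat.choose_eq_zero_of_lt (by simp at hi; omega), Nat.cast_zero, mul_zero])]
    rw [Polynomial.coeff_C_mul, Polynomial.coeff_X_add_one_pow, Nat.choose_self, Nat.cast_one, mul_one]
    rw [Polynomial.coeff_C_mul, Polynomial.coeff_X_add_one_pow, Nat.choose_succ_self_right]
    rw [zero_add, nsmul_eq_mul]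
    ring

lemma algebraMap_EA (c : K) :
    algebraMap K (EA K A) c = Polynomial.C (algebraMap K (AtK K A) c) := by
  simp [Polynomial.algebraMap_apply]

lemma ker_D (hD : DProps (K := K) dA D) (hdA : ExtendsTddt (K := K) dA)
    (hNoExpLog : NoExpLog (K := K) dA)
    (hinj : Function.Injective (algebraMap (LaurentPolynomial K) A))
    (P : EA K A) (h : D P = 0) : ∃ c : K, P = algebraMap K (EA K A) c := by
  have hco : ∀ j : ℕ, dApr K A dA (P.coeff j) + (j+1) • P.coeff (j+1) = 0 := by
    intro j
    rw [← D_coeff (A := A) hD, h, Polynomial.coeff_zero]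
  have hdeg : P.natDegree = 0 := by
    by_contra hn
    have hn1 : 1 ≤ P.natDegree := Nat.one_le_iff_ne_zero.mpr hn
    have hP0 : P ≠ 0 := fun hP => hn (by rw [hP, Polynomial.natDegree_zero])
    set n := P.natDegree with hndef
    have hlc : P.coeff n ≠ 0 := by
      rw [hndef]
      exact Polynomial.leadingCoeff_ne_zero.mpr hP0
    have hsucc : P.coeff (n+1) = 0 := Polynomial.coeff_natDegree_succ_eq_zero (p := P)
    have h1 : dApr K A dA (P.coeff n) = 0 := by
      have := hco n
      rwa [hsucc, smul_zero, add_zero] at this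
    obtain ⟨c, hc⟩ := ker_dApr (A := A) hNoExpLog _ h1
    have hcne : c ≠ 0 := by
      intro h0
      apply hlc
      rw [hc, h0, map_zero]
    have h2 : dApr K A dA (P.coeff (n-1)) = algebraMap K (AtK K A) (-(n • c)) := by
      have := hco (n-1)
      rw [show n - 1 + 1 = n from by omega] at this
      rw [hc] at this
      rw [map_neg, map_nsmul]
      exact eq_neg_of_add_eq_zero_left this
    have := dApr_const_zero (A := A) hdA hNoExpLog hinj _ _ h2
    have hnc : n • c = 0 := by rwa [neg_eq_zero] at this
    rw [nsmul_eq_mul] at hnc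
    rcases mul_eq_zero.mp hnc with h' | h'
    · exact absurd h' (Nat.cast_ne_zero.mpr (by omega))
    · exact hcne h'
  have h1 : dApr K A dA (P.coeff 0) = 0 := by
    have := hco 0
    rwa [Polynomial.coeff_eq_zero_of_natDegree_lt (n := 1) (by omega), smul_zero, add_zero] at this
  obtain ⟨c, hc⟩ := ker_dApr (A := A) hNoExpLog _ h1
  refine ⟨c, ?_⟩
  rw [Polynomial.eq_C_of_natDegree_eq_zero hdeg, hc, algebraMap_EA]

lemma fix_S (hσ : SProps (K := K) γ σ) (hγ : GammaProps γ)
    (P : EA K A) (h : σ P = P) : ∃ x : A, P = iA K A x := by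
  have hdeg : P.natDegree = 0 := by
    by_contra hn
    have hn1 : 1 ≤ P.natDegree := Nat.one_le_iff_ne_zero.mpr hn
    have hP0 : P ≠ 0 := fun hP => hn (by rw [hP, Polynomial.natDegree_zero])
    set n := P.natDegree with hndef
    set m := n - 1 with hmdef
    have hmn : n = m + 1 := by omega
    obtain ⟨htop, hsub⟩ := S_coeff_top (A := A) hσ P m (by omega)
    rw [h] at htop hsub
    have hfix : sPr K A γ (P.coeff (m+1)) = P.coeff (m+1) := htop.symm
    obtain ⟨x0, hx0⟩ := fix_sPr (A := A) hγ _ hfix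
    have hsub2 : sPr K A γ (P.coeff m) - P.coeff m = (-(((m+1) • x0))) ⊗ₜ[LaurentPolynomial K] 1 := by
      have h3 : sPr K A γ (P.coeff m) - P.coeff m = -((m+1) • sPr K A γ (P.coeff (m+1))) := by
        simp only [nsmul_eq_mul] at hsub ⊢
        linear_combination -hsub
      rw [h3, hfix, hx0, ← Algebra.TensorProduct.includeLeftRingHom_apply,
        ← Algebra.TensorProduct.includeLeftRingHom_apply, map_neg, map_nsmul]
    have hx00 := sPr_sub_const (A := A) hγ _ _ hsub2
    have hzero : ((m+1 : ℕ) : K) • x0 = 0 := by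
      rw [Nat.cast_smul_eq_nsmul]
      rwa [neg_eq_zero] at hx00
    have hx0z : x0 = 0 := ksmul_cancel (A := A) (Nat.cast_ne_zero.mpr (by omega)) hzero
    have : P.coeff n = 0 := by rw [hmn, hx0, hx0z, TensorProduct.zero_tmul]
    exact absurd this (by rw [hndef]; exact Polynomial.leadingCoeff_ne_zero.mpr hP0)
  have hc0 : sPr K A γ (P.coeff 0) = P.coeff 0 := by
    have hP : P = Polynomial.C (P.coeff 0) := Polynomial.eq_C_of_natDegree_eq_zero hdeg
    have h2 : σ (Polynomial.C (P.coeff 0)) = Polynomial.C (P.coeff 0) := by rw [← hP]; exact h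
    rw [S_C (A := A) hσ] at h2
    exact Polynomial.C_injective h2
  obtain ⟨x, hx⟩ := fix_sPr (A := A) hγ _ hc0
  refine ⟨x, ?_⟩
  rw [Polynomial.eq_C_of_natDegree_eq_zero hdeg, hx, iA_eq]

end EAlevel

end Stmt16

end Stmt16Aux

/-- If `A` is a differential `K`-algebra without exponents nor
logarithm, then for every `K`-linear representation `V` of `ℤ` the kernel of
`1 ⊗ ∂` on `V ⊗_K E_A` equals `V`; and for every differential module `M` over `A`
that is free as an `A`-module, the fixed points of `1 ⊗ σ` on `M ⊗_A E_A`
equal `M`. -/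
theorem stmt_16 (K : Type) [Field K] [IsAlgClosed K] [CharZero K]
    (A : Type) [CommRing A] [Algebra K A] [Algebra (LaurentPolynomial K) A]
    [IsScalarTower K (LaurentPolynomial K) A]
    (hinj : Function.Injective (algebraMap (LaurentPolynomial K) A))
    (dA : Derivation ℤ A A) (hdA : ExtendsTddt (K := K) dA)
    (hNoExpLog : NoExpLog (K := K) dA)
    (γ : K → Kˣ) (hγ : GammaProps γ)
    (D : Derivation ℤ (EA K A) (EA K A)) (hD : DProps (K := K) dA D)
    (σ : EA K A ≃+* EA K A) (hσ : SProps γ σ)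
    -- a `K`-linear representation `V` of `ℤ`
    (V : Type) [AddCommGroup V] [Module K V] (u : V ≃ₗ[K] V)
    -- the connection `1 ⊗ ∂` on `V ⊗_K E_A`
    (DW : (EA K A ⊗[K] V) →+ (EA K A ⊗[K] V))
    (hDW : ∀ (x : EA K A) (v : V), DW (x ⊗ₜ[K] v) = D x ⊗ₜ[K] v)
    -- a differential module `M` over `A`, free as an `A`-module
    (M : Type) [AddCommGroup M] [Module A M] [Module.Free A M]
    (nM : M →+ M) (hnM : ∀ (f : A) (m : M), nM (f • m) = dA f • m + f • nM m)
    -- the semi-linear automorphism `1 ⊗ σ` on `M ⊗_A E_A`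
    (σM : (EA K A ⊗[A] M) →+ (EA K A ⊗[A] M))
    (hσM : ∀ (x : EA K A) (m : M), σM (x ⊗ₜ[A] m) = σ x ⊗ₜ[A] m) :
    -- `(V ⊗_K E_A)^{1⊗∂ = 0} = V`
    ((∀ w : EA K A ⊗[K] V, DW w = 0 ↔ ∃ v : V, w = (1 : EA K A) ⊗ₜ[K] v) ∧
      Function.Injective (fun v : V => (1 : EA K A) ⊗ₜ[K] v)) ∧
    -- `(M ⊗_A E_A)^{1⊗σ = 1} = M`
    ((∀ w : EA K A ⊗[A] M, σM w = w ↔ ∃ m : M, w = (1 : EA K A) ⊗ₜ[A] m) ∧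
      Function.Injective (fun m : M => (1 : EA K A) ⊗ₜ[A] m)) := by
  classical
  haveI hNA : Nontrivial A := Stmt16.nontrivA (A := A) hinj
  -- injectivity of A → AtK
  have hIncl : Function.Injective
      (fun x : A => x ⊗ₜ[LaurentPolynomial K] (1 : AddMonoidAlgebra K K)) := by
    intro x y hxy
    have h2 := congrArg (Stmt16.Phi K A) hxy
    simp only [Stmt16.Phi_includeLeft] at h2
    exact Finsupp.single_injective 0 h2
  have hiAinj : Function.Injective (iA K A) := by
    intro x y h
    apply hIncl
    have h2 : (Polynomial.C (x ⊗ₜ[LaurentPolynomial K] (1 : AddMonoidAlgebra K K)) : EA K A)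
        = Polynomial.C (y ⊗ₜ[LaurentPolynomial K] (1 : AddMonoidAlgebra K K)) := by
      rw [← Stmt16.iA_eq (A := A), ← Stmt16.iA_eq (A := A), h]
    exact Polynomial.C_injective h2
  haveI : Nontrivial (AtK K A) := by
    refine ⟨⟨0, 1, fun h01 => ?_⟩⟩
    have : (0 : A) ⊗ₜ[LaurentPolynomial K] (1 : AddMonoidAlgebra K K)
        = (1 : A) ⊗ₜ[LaurentPolynomial K] (1 : AddMonoidAlgebra K K) := by
      rw [TensorProduct.zero_tmul, ← Algebra.TensorProduct.one_def, h01]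
    exact zero_ne_one (hIncl this)
  have halgEA : Function.Injective (algebraMap K (EA K A)) := RingHom.injective _
  have halgKEA_iA : ∀ c : K, algebraMap K (EA K A) c = iA K A (algebraMap K A c) := by
    intro c
    rw [Stmt16.algebraMap_EA (A := A), Stmt16.algKAtK (A := A), Stmt16.iA_eq (A := A)]
  have hD_algK : ∀ c : K, D (algebraMap K (EA K A) c) = 0 := by
    intro c
    rw [halgKEA_iA, hD.1, hdA.1, map_zero]
  have hDsmulK : ∀ (k : K) (e : EA K A), D (k • e) = k • D e := by
    intro k e
    rw [Algebra.smul_def, Algebra.smul_def, Derivation.leibniz, hD_algK, smul_zero,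
      add_zero, smul_eq_mul]
  have hσsmulA : ∀ (a : A) (e : EA K A), σ (a • e) = a • σ e := by
    intro a e
    rw [Algebra.smul_def, Algebra.smul_def, map_mul]
    have : algebraMap A (EA K A) a = iA K A a := by
      simp [Polynomial.algebraMap_apply, iA]
    rw [this, hσ.1]
  constructor
  · -- part 1
    set bV := Module.Basis.ofVectorSpace K V with hbV
    set ΘV : (EA K A ⊗[K] V) ≃ₗ[K] ((Module.Basis.ofVectorSpaceIndex K V) →₀ EA K A) :=
      (TensorProduct.congr (LinearEquiv.refl K (EA K A)) bV.repr).trans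
        (TensorProduct.finsuppScalarRight K K (EA K A) _) with hΘV
    have ΘV_tmul : ∀ (e : EA K A) (v : V) j, ΘV (e ⊗ₜ[K] v) j = bV.repr v j • e := by
      intro e v j
      rw [hΘV]
      simp only [LinearEquiv.trans_apply, TensorProduct.congr_tmul, LinearEquiv.refl_apply]
      rw [TensorProduct.finsuppScalarRight_apply_tmul_apply]
    have transportD : ∀ (w : EA K A ⊗[K] V) j, ΘV (DW w) j = D (ΘV w j) := by
      intro w
      induction w using TensorProduct.induction_on with
      | zero => intro j; simp
      | tmul e v => intro j; rw [hDW, ΘV_tmul, ΘV_tmul, hDsmulK]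
      | add p q hp hq =>
          intro j
          rw [map_add, map_add, map_add, Finsupp.add_apply, Finsupp.add_apply, hp, hq, map_add]
    constructor
    · intro w
      constructor
      · intro hw
        have hDj : ∀ j, D (ΘV w j) = 0 := by
          intro j
          rw [← transportD, hw, map_zero, Finsupp.coe_zero, Pi.zero_apply]
        have hconst : ∀ j, ∃ c : K, ΘV w j = algebraMap K (EA K A) c := fun j =>
          Stmt16.ker_D (A := A) hD hdA hNoExpLog hinj _ (hDj j)
        set ρ : EA K A → K := Function.invFun (algebraMap K (EA K A)) with hρ
        have hρ0 : ρ 0 = 0 := by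
          have h2 : algebraMap K (EA K A) (ρ 0) = 0 := Function.invFun_eq ⟨0, map_zero _⟩
          exact halgEA (by rw [h2, map_zero])
        have hgj : ∀ j, algebraMap K (EA K A) (((ΘV w).mapRange ρ hρ0) j) = ΘV w j := by
          intro j
          rw [Finsupp.mapRange_apply]
          obtain ⟨c, hc⟩ := hconst j
          rw [hc]
          exact Function.invFun_eq ⟨c, rfl⟩
        refine ⟨bV.repr.symm ((ΘV w).mapRange ρ hρ0), ?_⟩
        apply ΘV.injective
        refine Finsupp.ext fun j => ?_
        rw [ΘV_tmul, LinearEquiv.apply_symm_apply, ← Algebra.algebraMap_eq_smul_one]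
        exact (hgj j).symm
      · rintro ⟨v, rfl⟩
        rw [hDW, Derivation.map_one_eq_zero, TensorProduct.zero_tmul]
    · intro v v' hvv
      simp only at hvv
      apply bV.repr.injective
      ext j
      have h1 := congrArg (fun f => f j) (congrArg ΘV hvv)
      simp only [ΘV_tmul] at h1
      rw [← Algebra.algebraMap_eq_smul_one, ← Algebra.algebraMap_eq_smul_one] at h1
      exact halgEA h1
  · -- part 2
    set bM := Module.Free.chooseBasis A M with hbM
    set ΘM : (EA K A ⊗[A] M) ≃ₗ[A] ((Module.Free.ChooseBasisIndex A M) →₀ EA K A) :=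
      (TensorProduct.congr (LinearEquiv.refl A (EA K A)) bM.repr).trans
        (TensorProduct.finsuppScalarRight A A (EA K A) _) with hΘM
    have ΘM_tmul : ∀ (e : EA K A) (m : M) j, ΘM (e ⊗ₜ[A] m) j = bM.repr m j • e := by
      intro e m j
      rw [hΘM]
      simp only [LinearEquiv.trans_apply, TensorProduct.congr_tmul, LinearEquiv.refl_apply]
      rw [TensorProduct.finsuppScalarRight_apply_tmul_apply]
    have transportS : ∀ (w : EA K A ⊗[A] M) j, ΘM (σM w) j = σ (ΘM w j) := by
      intro w
      induction w using TensorProduct.induction_on with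
      | zero => intro j; simp
      | tmul e m => intro j; rw [hσM, ΘM_tmul, ΘM_tmul, hσsmulA]
      | add p q hp hq =>
          intro j
          rw [map_add, map_add, map_add, Finsupp.add_apply, Finsupp.add_apply, hp, hq, map_add]
    have halgAEA : ∀ a : A, algebraMap A (EA K A) a = iA K A a := by
      intro a
      simp [Polynomial.algebraMap_apply, iA]
    constructor
    · intro w
      constructor
      · intro hw
        have hSj : ∀ j, σ (ΘM w j) = ΘM w j := by
          intro j
          rw [← transportS, hw]
        have hconst : ∀ j, ∃ x : A, ΘM w j = iA K A x := fun j =>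
          Stmt16.fix_S (A := A) hσ hγ _ (hSj j)
        set ρ : EA K A → A := Function.invFun (iA K A) with hρ
        have hρ0 : ρ 0 = 0 := by
          have h2 : iA K A (ρ 0) = 0 := Function.invFun_eq ⟨0, map_zero _⟩
          exact hiAinj (by rw [h2, map_zero])
        have hgj : ∀ j, iA K A (((ΘM w).mapRange ρ hρ0) j) = ΘM w j := by
          intro j
          rw [Finsupp.mapRange_apply]
          obtain ⟨x, hx⟩ := hconst j
          rw [hx]
          exact Function.invFun_eq ⟨x, rfl⟩
        refine ⟨bM.repr.symm ((ΘM w).mapRange ρ hρ0), ?_⟩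
        apply ΘM.injective
        refine Finsupp.ext fun j => ?_
        rw [ΘM_tmul, LinearEquiv.apply_symm_apply, ← Algebra.algebraMap_eq_smul_one, halgAEA]
        exact (hgj j).symm
      · rintro ⟨m, rfl⟩
        rw [hσM, map_one]
    · intro m m' hmm
      simp only at hmm
      apply bM.repr.injective
      ext j
      have h1 := congrArg (fun f => f j) (congrArg ΘM hmm)
      simp only [ΘM_tmul] at h1
      rw [← Algebra.algebraMap_eq_smul_one, ← Algebra.algebraMap_eq_smul_one,
        halgAEA, halgAEA] at h1
      exact hiAinj h1

end
end

section
/- Let A be a differential K-algebra without exponents nor logarithm, and M, N regular singular differential modules over A (finite free as A-modules and trivialized by E_A as differential modules). Then Hom_A(M,N) and M ⊗_A N, with their canonical connections, are regular singular; in particular the dual M* is regular singular. -/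
open scoped TensorProduct
open Polynomial

noncomputable section

variable (K : Type) [Field K] [IsAlgClosed K] [CharZero K]
variable (A : Type) [CommRing A] [Algebra K A] [Algebra (LaurentPolynomial K) A]
  [IsScalarTower K (LaurentPolynomial K) A]

variable {K A}

set_option synthInstance.maxHeartbeats 1000000
set_option maxHeartbeats 1000000


/-- `∇ : M → M` is a connection on the `A`-module `M` over `(A,∂)`:
`∇(f·m) = ∂(f)·m + f·∇(m)`. -/
def IsConnection (dA : Derivation ℤ A A) {M : Type} [AddCommGroup M] [Module A M]
    (nb : M →+ M) : Prop :=
  ∀ (f : A) (m : M), nb (f • m) = dA f • m + f • nb m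


/-- The differential module `(M,∇)` over `A` is regular singular: it is finite free
as an `A`-module and it is trivialized by `E_A`, i.e. `M ⊗_A E_A`, with the
connection `∇ ⊗ 1 + 1 ⊗ ∂`, is isomorphic as a differential module over `E_A` to a
finite direct sum of copies of `(E_A, ∂)`. -/
def IsRegSing (D : Derivation ℤ (EA K A) (EA K A))
    {M : Type} [AddCommGroup M] [Module A M] (nb : M →+ M) : Prop :=
  Module.Finite A M ∧ Module.Free A M ∧
  ∃ nb' : (EA K A ⊗[A] M) →+ (EA K A ⊗[A] M),
    (∀ (x : EA K A) (m : M), nb' (x ⊗ₜ[A] m) = D x ⊗ₜ[A] m + x ⊗ₜ[A] nb m) ∧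
    ∃ (n : ℕ) (φ : (EA K A ⊗[A] M) ≃ₗ[EA K A] (Fin n → EA K A)),
      ∀ w i, φ (nb' w) i = D (φ w i)

section Generic
variable {S : Type} [CommRing S] {E : Type} [CommRing E] [Algebra S E]
variable (dA : Derivation ℤ S S) (D : Derivation ℤ E E)

/-- flatten a matrix of scalars into a vector -/
def flatM (R : Type) [CommRing R] (a b : ℕ) : Matrix (Fin a) (Fin b) R ≃ₗ[R] (Fin (a * b) → R) where
  toFun f k := f (finProdFinEquiv.symm k).1 (finProdFinEquiv.symm k).2
  map_add' _ _ := rfl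
  map_smul' _ _ := rfl
  invFun g i j := g (finProdFinEquiv (i, j))
  left_inv f := by
    ext i j
    show f (finProdFinEquiv.symm (finProdFinEquiv (i, j))).1 _ = _
    rw [Equiv.symm_apply_apply]
  right_inv g := by
    ext k
    show g (finProdFinEquiv ((finProdFinEquiv.symm k).1, (finProdFinEquiv.symm k).2)) = g k
    rw [Prod.mk.eta, Equiv.apply_symm_apply]

def flatP (R : Type) [CommRing R] (a b : ℕ) : (Fin a → Fin b → R) ≃ₗ[R] (Fin (a * b) → R) where
  toFun f k := f (finProdFinEquiv.symm k).1 (finProdFinEquiv.symm k).2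
  map_add' _ _ := rfl
  map_smul' _ _ := rfl
  invFun g i j := g (finProdFinEquiv (i, j))
  left_inv f := by
    ext i j
    show f (finProdFinEquiv.symm (finProdFinEquiv (i, j))).1 _ = _
    rw [Equiv.symm_apply_apply]
  right_inv g := by
    ext k
    show g (finProdFinEquiv ((finProdFinEquiv.symm k).1, (finProdFinEquiv.symm k).2)) = g k
    rw [Prod.mk.eta, Equiv.apply_symm_apply]

@[simp] lemma flatP_apply (R : Type) [CommRing R] (a b : ℕ) (f : Fin a → Fin b → R) (k) :
    flatP R a b f k = f (finProdFinEquiv.symm k).1 (finProdFinEquiv.symm k).2 := rfl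

@[simp] lemma flatM_apply (R : Type) [CommRing R] (a b : ℕ) (f : Matrix (Fin a) (Fin b) R) (k) :
    flatM R a b f k = f (finProdFinEquiv.symm k).1 (finProdFinEquiv.symm k).2 := rfl

/-- extension of a connection to the base change -/
def mkNb (hD1 : ∀ x : S, D (algebraMap S E x) = algebraMap S E (dA x))
    {H : Type} [AddCommGroup H] [Module S H] (nH : H →+ H)
    (hnH : ∀ (r : S) (h : H), nH (r • h) = dA r • h + r • nH h) :
    (E ⊗[S] H) →+ (E ⊗[S] H) :=
  TensorProduct.liftAddHom
    { toFun := fun x =>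
        { toFun := fun h => D x ⊗ₜ[S] h + x ⊗ₜ[S] nH h
          map_zero' := by simp
          map_add' := fun h1 h2 => by
            simp only [TensorProduct.tmul_add, map_add]; abel }
      map_zero' := by ext h; simp
      map_add' := fun x y => by
        ext h
        simp only [map_add, TensorProduct.add_tmul, AddMonoidHom.coe_mk, ZeroHom.coe_mk,
          AddMonoidHom.add_apply]
        abel }
    (fun r x h => by
      simp only [AddMonoidHom.coe_mk, ZeroHom.coe_mk]
      have hD : D (r • x) = r • D x + (algebraMap S E (dA r)) * x := by
        rw [Algebra.smul_def, Derivation.leibniz, smul_eq_mul, smul_eq_mul, hD1,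
          Algebra.smul_def]
        ring
      rw [hD, hnH, TensorProduct.add_tmul, TensorProduct.tmul_add, TensorProduct.tmul_smul,
        TensorProduct.tmul_smul, TensorProduct.tmul_smul, TensorProduct.smul_tmul',
        TensorProduct.smul_tmul', TensorProduct.smul_tmul', Algebra.smul_def (dA r) x]
      abel)

@[simp] lemma mkNb_tmul (hD1 : ∀ x : S, D (algebraMap S E x) = algebraMap S E (dA x))
    {H : Type} [AddCommGroup H] [Module S H] (nH : H →+ H)
    (hnH : ∀ (r : S) (h : H), nH (r • h) = dA r • h + r • nH h) (x : E) (h : H) :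
    mkNb dA D hD1 nH hnH (x ⊗ₜ[S] h) = D x ⊗ₜ[S] h + x ⊗ₜ[S] nH h :=
  TensorProduct.liftAddHom_tmul _ _ _ _

/-- generic statement of being trivialized by `E` plus finite freeness -/
def IsRegSingG (D : Derivation ℤ E E) {M : Type} [AddCommGroup M] [Module S M]
    (nb : M →+ M) : Prop :=
  Module.Finite S M ∧ Module.Free S M ∧
  ∃ nb' : (E ⊗[S] M) →+ (E ⊗[S] M),
    (∀ (x : E) (m : M), nb' (x ⊗ₜ[S] m) = D x ⊗ₜ[S] m + x ⊗ₜ[S] nb m) ∧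
    ∃ (n : ℕ) (φ : (E ⊗[S] M) ≃ₗ[E] (Fin n → E)),
      ∀ w i, φ (nb' w) i = D (φ w i)

def IsConnectionG (dA : Derivation ℤ S S) {M : Type} [AddCommGroup M] [Module S M]
    (nb : M →+ M) : Prop :=
  ∀ (f : S) (m : M), nb (f • m) = dA f • m + f • nb m

theorem base_regSingG (hD1 : ∀ x : S, D (algebraMap S E x) = algebraMap S E (dA x)) :
    IsRegSingG (S := S) (E := E) D (dA.toLinearMap.toAddMonoidHom : S →+ S) := by
  have hs : ∀ (r a : S), dA.toLinearMap.toAddMonoidHom (r • a)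
      = dA r • a + r • dA.toLinearMap.toAddMonoidHom a := by
    intro r a
    simp only [LinearMap.toAddMonoidHom_coe, Derivation.coeFn_coe, smul_eq_mul,
      Derivation.leibniz]
    ring
  refine ⟨inferInstance, inferInstance, mkNb dA D hD1 _ hs,
    fun x h => mkNb_tmul dA D hD1 _ _ x h, 1,
    (TensorProduct.AlgebraTensorModule.rid S E E) ≪≫ₗ
      (LinearEquiv.funUnique (Fin 1) E E).symm, ?_⟩
  intro w i
  induction w using TensorProduct.induction_on with
  | zero => simp
  | tmul x a =>
    simp only [LinearEquiv.trans_apply, mkNb_tmul, map_add,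
      TensorProduct.AlgebraTensorModule.rid_tmul, LinearMap.toAddMonoidHom_coe,
      Derivation.coeFn_coe]
    show a • D x + dA a • x = D (a • x)
    rw [Algebra.smul_def, Algebra.smul_def, Algebra.smul_def, Derivation.leibniz,
      smul_eq_mul, smul_eq_mul, hD1]
    ring
  | add w1 w2 ih1 ih2 =>
    simp only [map_add, Pi.add_apply, ih1, ih2]
end Generic

section GenericHom
variable {S : Type} [CommRing S] {E : Type} [CommRing E] [Algebra S E]
variable (dA : Derivation ℤ S S) (D : Derivation ℤ E E)

theorem hom_regSingG (hD1 : ∀ x : S, D (algebraMap S E x) = algebraMap S E (dA x))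
    {M : Type} [AddCommGroup M] [Module S M]
    (nM : M →+ M) (hnM : IsConnectionG dA nM) (hM : IsRegSingG (S := S) (E := E) D nM)
    {N : Type} [AddCommGroup N] [Module S N]
    (nN : N →+ N) (hnN : IsConnectionG dA nN) (hN : IsRegSingG (S := S) (E := E) D nN)
    (nH : (M →ₗ[S] N) →+ (M →ₗ[S] N))
    (hnH : ∀ (g : M →ₗ[S] N) (m : M), nH g m = nN (g m) - g (nM m)) :
    IsRegSingG (S := S) (E := E) D nH := by
  classical
  obtain ⟨hMf, hMfree, nbM, hnbM, n, φM, hφM⟩ := hM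
  obtain ⟨hNf, hNfree, nbN, hnbN, n', φN, hφN⟩ := hN
  haveI := hMf; haveI := hMfree; haveI := hNf; haveI := hNfree
  have hnN' : ∀ (f : S) (x : N), nN (f • x) = dA f • x + f • nN x := hnN
  have hnHs : ∀ (r : S) (g : M →ₗ[S] N), nH (r • g) = dA r • g + r • nH g := by
    intro r g
    ext m
    simp only [hnH, LinearMap.smul_apply, LinearMap.add_apply, hnN', smul_sub]
    abel
  let b := Module.Free.chooseBasis S M
  let ι := Module.Free.ChooseBasisIndex S M
  let e : (E ⊗[S] (M →ₗ[S] N)) ≃ₗ[E] ((E ⊗[S] M) →ₗ[E] (E ⊗[S] N)) :=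
    (TensorProduct.AlgebraTensorModule.congr (LinearEquiv.refl E E)
        (b.constr (M' := N) S).symm) ≪≫ₗ
    (TensorProduct.piRight S E E (fun _ : ι => N)) ≪≫ₗ
    ((b.baseChange E).constr E)
  have he : ∀ (x : E) (f : M →ₗ[S] N) (y : E) (m : M),
      e (x ⊗ₜ[S] f) (y ⊗ₜ[S] m) = (x * y) ⊗ₜ[S] f m := by
    intro x f y m
    have hsymm : (b.constr (M' := N) S).symm f = fun i => f (b i) := by
      rw [LinearEquiv.symm_apply_eq]
      exact (Module.Basis.constr_self b S f).symm
    have h1 : e (x ⊗ₜ[S] f)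
        = (b.baseChange E).constr E (fun i => x ⊗ₜ[S] f (b i)) := by
      simp only [e, LinearEquiv.trans_apply, TensorProduct.AlgebraTensorModule.congr_tmul,
        LinearEquiv.refl_apply, hsymm, TensorProduct.piRight_apply,
        TensorProduct.piRightHom_tmul]
      rfl
    have h2 : ((e (x ⊗ₜ[S] f)).restrictScalars S) ∘ₗ (TensorProduct.mk S E M 1)
        = (TensorProduct.mk S E N x) ∘ₗ f := by
      apply b.ext; intro i
      simp only [LinearMap.coe_comp, Function.comp_apply, LinearMap.coe_restrictScalars,
        TensorProduct.mk_apply]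
      rw [h1, ← Module.Basis.baseChange_apply, Module.Basis.constr_basis]
    have h3 : e (x ⊗ₜ[S] f) ((1 : E) ⊗ₜ[S] m) = x ⊗ₜ[S] f m := by
      have := LinearMap.congr_fun h2 m
      simpa using this
    calc e (x ⊗ₜ[S] f) (y ⊗ₜ[S] m) = e (x ⊗ₜ[S] f) (y • ((1 : E) ⊗ₜ[S] m)) := by
          rw [TensorProduct.smul_tmul', smul_eq_mul, mul_one]
    _ = y • (e (x ⊗ₜ[S] f) ((1 : E) ⊗ₜ[S] m)) := map_smul _ _ _
    _ = y • (x ⊗ₜ[S] f m) := by rw [h3]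
    _ = (x * y) ⊗ₜ[S] f m := by rw [TensorProduct.smul_tmul', smul_eq_mul, mul_comm y x]
  let nb := mkNb dA D hD1 nH hnHs
  have hkey : ∀ (h : E ⊗[S] (M →ₗ[S] N)) (u : E ⊗[S] M),
      e (nb h) u + e h (nbM u) = nbN (e h u) := by
    intro h
    induction h using TensorProduct.induction_on with
    | zero => intro u; simp
    | tmul x f =>
      intro u
      induction u using TensorProduct.induction_on with
      | zero => simp
      | tmul y m =>
        have hnb : nb (x ⊗ₜ[S] f) = D x ⊗ₜ[S] f + x ⊗ₜ[S] nH f :=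
          mkNb_tmul dA D hD1 nH hnHs x f
        have hxy : D (x * y) = D x * y + x * D y := by
          rw [Derivation.leibniz, smul_eq_mul, smul_eq_mul]; ring
        have hfm : nN (f m) = nH f m + f (nM m) := by rw [hnH]; abel
        rw [hnb, hnbM, map_add, LinearMap.add_apply, map_add, he (D x) f y m,
          he x (nH f) y m, he x f (D y) m, he x f y (nM m), he x f y m,
          hnbN (x * y) (f m), hfm, hxy, TensorProduct.add_tmul, TensorProduct.tmul_add]
        abel
      | add u1 u2 ih1 ih2 =>
        simp only [map_add, ih1.symm, ih2.symm]
        abel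
    | add h1 h2 ih1 ih2 =>
      intro u
      simp only [map_add, LinearMap.add_apply]
      rw [← ih1 u, ← ih2 u]
      abel
  let v : Module.Basis (Fin n) E (E ⊗[S] M) := (Pi.basisFun E (Fin n)).map φM.symm
  let w : Module.Basis (Fin n') E (E ⊗[S] N) := (Pi.basisFun E (Fin n')).map φN.symm
  have hv0 : ∀ j, nbM (v j) = 0 := by
    intro j
    apply φM.injective
    rw [map_zero]
    funext i
    rw [hφM]
    have hval : φM (v j) = Pi.single j 1 := by
      simp [v, Module.Basis.map_apply, Pi.basisFun_apply, LinearEquiv.apply_symm_apply]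
    rw [hval]
    rcases eq_or_ne i j with rfl | hne
    · rw [Pi.single_eq_same, Derivation.map_one_eq_zero]; rfl
    · rw [Pi.single_eq_of_ne hne, map_zero]; rfl
  have hwrepr : ∀ (u : E ⊗[S] N) i, w.repr u i = φN u i := by
    intro u i
    simp [w, Module.Basis.map_repr, Pi.basisFun_repr]
  refine ⟨inferInstance, inferInstance, nb, fun x g => mkNb_tmul dA D hD1 nH hnHs x g,
    n' * n, e ≪≫ₗ (LinearMap.toMatrix v w) ≪≫ₗ flatM E n' n, ?_⟩
  intro h k
  simp only [LinearEquiv.trans_apply, flatM_apply, LinearMap.toMatrix_apply]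
  have hk := hkey h (v ((finProdFinEquiv.symm k).2))
  rw [hv0, map_zero, add_zero] at hk
  rw [hk, hwrepr, hwrepr, hφN]
end GenericHom

section GenericTensor
variable {S : Type} [CommRing S] {E : Type} [CommRing E] [Algebra S E]
variable (dA : Derivation ℤ S S) (D : Derivation ℤ E E)

theorem tensor_regSingG (hD1 : ∀ x : S, D (algebraMap S E x) = algebraMap S E (dA x))
    {M : Type} [AddCommGroup M] [Module S M]
    (nM : M →+ M) (hnM : IsConnectionG dA nM) (hM : IsRegSingG (S := S) (E := E) D nM)
    {N : Type} [AddCommGroup N] [Module S N]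
    (nN : N →+ N) (hnN : IsConnectionG dA nN) (hN : IsRegSingG (S := S) (E := E) D nN)
    (nT : (M ⊗[S] N) →+ (M ⊗[S] N))
    (hnT : ∀ (m : M) (x : N), nT (m ⊗ₜ[S] x) = nM m ⊗ₜ[S] x + m ⊗ₜ[S] nN x) :
    IsRegSingG (S := S) (E := E) D nT := by
  classical
  obtain ⟨hMf, hMfree, nbM, hnbM, n, φM, hφM⟩ := hM
  obtain ⟨hNf, hNfree, nbN, hnbN, n', φN, hφN⟩ := hN
  haveI := hMf; haveI := hMfree; haveI := hNf; haveI := hNfree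
  have hnM' : ∀ (f : S) (x : M), nM (f • x) = dA f • x + f • nM x := hnM
  have hnTs : ∀ (r : S) (t : M ⊗[S] N), nT (r • t) = dA r • t + r • nT t := by
    intro r t
    induction t using TensorProduct.induction_on with
    | zero => simp
    | tmul m x =>
      simp only [TensorProduct.smul_tmul', hnT, hnM', TensorProduct.add_tmul, smul_add]
      abel
    | add t1 t2 ih1 ih2 =>
      rw [smul_add, map_add, ih1, ih2, map_add, smul_add, smul_add]
      abel
  let nb := mkNb dA D hD1 nT hnTs
  -- the equivalence E ⊗ (M ⊗ N) ≃ (E⊗M) ⊗[E] (E⊗N)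
  let eT : (E ⊗[S] (M ⊗[S] N)) ≃ₗ[E] ((E ⊗[S] M) ⊗[E] (E ⊗[S] N)) :=
    TensorProduct.AlgebraTensorModule.distribBaseChange S E M N
  have heT : ∀ (x : E) (m : M) (y : N),
      eT (x ⊗ₜ[S] (m ⊗ₜ[S] y)) = (x ⊗ₜ[S] m) ⊗ₜ[E] ((1 : E) ⊗ₜ[S] y) := by
    intro x m y
    rw [eq_comm, ← LinearEquiv.symm_apply_eq]
    show (TensorProduct.AlgebraTensorModule.cancelBaseChange S E E (E ⊗[S] M) N ≪≫ₗ
      TensorProduct.AlgebraTensorModule.assoc S S E E M N).symm.symm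
      ((x ⊗ₜ[S] m) ⊗ₜ[E] ((1 : E) ⊗ₜ[S] y)) = x ⊗ₜ[S] (m ⊗ₜ[S] y)
    rw [LinearEquiv.symm_symm, LinearEquiv.trans_apply,
      TensorProduct.AlgebraTensorModule.cancelBaseChange_tmul, one_smul,
      TensorProduct.AlgebraTensorModule.assoc_tmul]
  let φT : (E ⊗[S] (M ⊗[S] N)) ≃ₗ[E] (Fin (n' * n) → E) :=
    eT ≪≫ₗ TensorProduct.congr φM φN ≪≫ₗ
    TensorProduct.piRight E E (Fin n → E) (fun _ : Fin n' => E) ≪≫ₗ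
    LinearEquiv.piCongrRight (fun _ : Fin n' => TensorProduct.rid E (Fin n → E)) ≪≫ₗ
    flatP E n' n
  have hφT : ∀ (x : E) (m : M) (y : N) (k : Fin (n' * n)),
      φT (x ⊗ₜ[S] (m ⊗ₜ[S] y)) k
        = φN ((1 : E) ⊗ₜ[S] y) (finProdFinEquiv.symm k).1
          * φM (x ⊗ₜ[S] m) (finProdFinEquiv.symm k).2 := by
    intro x m y k
    simp only [φT, LinearEquiv.trans_apply, heT, TensorProduct.congr_tmul,
      TensorProduct.piRight_apply, TensorProduct.piRightHom_tmul,
      LinearEquiv.piCongrRight_apply, TensorProduct.rid_tmul, flatP_apply,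
      Pi.smul_apply, smul_eq_mul]
  refine ⟨inferInstance, inferInstance, nb, fun x t => mkNb_tmul dA D hD1 nT hnTs x t,
    n' * n, φT, ?_⟩
  intro w k
  induction w using TensorProduct.induction_on with
  | zero => simp
  | tmul x t =>
    induction t using TensorProduct.induction_on with
    | zero => simp
    | tmul m y =>
      have h1 : nb (x ⊗ₜ[S] (m ⊗ₜ[S] y)) = D x ⊗ₜ[S] (m ⊗ₜ[S] y)
          + (x ⊗ₜ[S] (nM m ⊗ₜ[S] y) + x ⊗ₜ[S] (m ⊗ₜ[S] nN y)) := by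
        rw [mkNb_tmul dA D hD1 nT hnTs, hnT, TensorProduct.tmul_add]
      have hM2 : φM (D x ⊗ₜ[S] m) ((finProdFinEquiv.symm k).2)
          + φM (x ⊗ₜ[S] nM m) ((finProdFinEquiv.symm k).2)
          = D (φM (x ⊗ₜ[S] m) ((finProdFinEquiv.symm k).2)) := by
        have h := hφM (x ⊗ₜ[S] m) ((finProdFinEquiv.symm k).2)
        rw [hnbM, map_add, Pi.add_apply] at h
        exact h
      have hN2 : φN ((1 : E) ⊗ₜ[S] nN y) ((finProdFinEquiv.symm k).1)
          = D (φN ((1 : E) ⊗ₜ[S] y) ((finProdFinEquiv.symm k).1)) := by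
        have h := hφN ((1 : E) ⊗ₜ[S] y) ((finProdFinEquiv.symm k).1)
        rw [hnbN, Derivation.map_one_eq_zero, TensorProduct.zero_tmul, zero_add] at h
        exact h
      rw [h1, map_add, map_add, Pi.add_apply, Pi.add_apply, hφT, hφT, hφT, hφT,
        Derivation.leibniz, smul_eq_mul, smul_eq_mul, ← hM2, ← hN2]
      ring
    | add t1 t2 ih1 ih2 =>
      rw [TensorProduct.tmul_add]
      simp only [map_add, Pi.add_apply, ih1, ih2]
  | add w1 w2 ih1 ih2 =>
    simp only [map_add, Pi.add_apply, ih1, ih2]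
end GenericTensor


/-- for `M, N` regular singular differential modules over a
differential `K`-algebra `A` without exponents nor logarithm, the differential
modules `Hom_A(M,N)` (with `∇(f) = ∇_N ∘ f − f ∘ ∇_M`) and `M ⊗_A N` (with
`∇(m⊗n) = ∇m⊗n + m⊗∇n`) are regular singular; in particular the dual
`M* = Hom_A(M,A)` is regular singular. -/
theorem stmt_17 (K : Type) [Field K] [IsAlgClosed K] [CharZero K]
    (A : Type) [CommRing A] [Algebra K A] [Algebra (LaurentPolynomial K) A]
    [IsScalarTower K (LaurentPolynomial K) A]
    (hinj : Function.Injective (algebraMap (LaurentPolynomial K) A))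
    (dA : Derivation ℤ A A) (hdA : ExtendsTddt (K := K) dA)
    (hNoExpLog : NoExpLog (K := K) dA)
    (D : Derivation ℤ (EA K A) (EA K A)) (hD : DProps (K := K) dA D)
    (M : Type) [AddCommGroup M] [Module A M]
    (nM : M →+ M) (hnM : IsConnection dA nM) (hM : IsRegSing D nM)
    (N : Type) [AddCommGroup N] [Module A N]
    (nN : N →+ N) (hnN : IsConnection dA nN) (hN : IsRegSing D nN) :
    -- the internal hom `Hom_A(M,N)` is regular singular
    (∀ nH : (M →ₗ[A] N) →+ (M →ₗ[A] N),
      (∀ (g : M →ₗ[A] N) (m : M), nH g m = nN (g m) - g (nM m)) →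
        IsRegSing D nH) ∧
    -- the tensor product `M ⊗_A N` is regular singular
    (∀ nT : (M ⊗[A] N) →+ (M ⊗[A] N),
      (∀ (m : M) (n : N), nT (m ⊗ₜ[A] n) = nM m ⊗ₜ[A] n + m ⊗ₜ[A] nN n) →
        IsRegSing D nT) ∧
    -- in particular the dual `M* = Hom_A(M,A)` is regular singular
    (∀ nD : (M →ₗ[A] A) →+ (M →ₗ[A] A),
      (∀ (g : M →ₗ[A] A) (m : M), nD g m = dA (g m) - g (nM m)) →
        IsRegSing D nD) := by
  have hD1 : ∀ x : A, D (algebraMap A (EA K A) x) = algebraMap A (EA K A) (dA x) := hD.1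
  have hMg : IsRegSingG (S := A) (E := EA K A) D nM := hM
  have hNg : IsRegSingG (S := A) (E := EA K A) D nN := hN
  have hnMg : IsConnectionG dA nM := hnM
  have hnNg : IsConnectionG dA nN := hnN
  have hdAc : IsConnectionG dA (dA.toLinearMap.toAddMonoidHom : A →+ A) := by
    intro f m
    simp only [LinearMap.toAddMonoidHom_coe, Derivation.coeFn_coe, smul_eq_mul,
      Derivation.leibniz]
    ring
  have hAg : IsRegSingG (S := A) (E := EA K A) D (dA.toLinearMap.toAddMonoidHom : A →+ A) :=
    base_regSingG (S := A) (E := EA K A) dA D hD1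
  refine ⟨?_, ?_, ?_⟩
  · intro nH h
    exact hom_regSingG (S := A) (E := EA K A) dA D hD1 nM hnMg hMg nN hnNg hNg nH h
  · intro nT h
    exact tensor_regSingG (S := A) (E := EA K A) dA D hD1 nM hnMg hMg nN hnNg hNg nT h
  · intro nD h
    exact hom_regSingG (S := A) (E := EA K A) dA D hD1 nM hnMg hMg (dA.toLinearMap.toAddMonoidHom) hdAc hAg nD
      (fun g m => h g m)

end
end

section
/- Let A be a differential K-algebra without exponents nor logarithm such that ∂: E_A → E_A is surjective. Then the class of regular singular differential modules over A is stable under extensions: if 0 → M → Q → N → 0 is an exact sequence of differential modules over A with M and N regular singular, then Q is regular singular. -/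
open scoped TensorProduct
open Polynomial

noncomputable section

variable (K : Type) [Field K] [IsAlgClosed K] [CharZero K]
variable (A : Type) [CommRing A] [Algebra K A] [Algebra (LaurentPolynomial K) A]
  [IsScalarTower K (LaurentPolynomial K) A]

variable {K A}

set_option synthInstance.maxHeartbeats 1000000
set_option maxHeartbeats 1000000


set_option maxHeartbeats 8000000 in
/-- if `A` is a differential `K`-algebra without exponents nor
logarithm such that `∂ : E_A → E_A` is surjective, then regular singular
differential modules over `A` are stable under extensions: if
`0 → M → Q → N → 0` is an exact sequence of differential modules over `A` with
`M` and `N` regular singular, then `Q` is regular singular. -/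
theorem stmt_18 (K : Type) [Field K] [IsAlgClosed K] [CharZero K]
    (A : Type) [CommRing A] [Algebra K A] [Algebra (LaurentPolynomial K) A]
    [IsScalarTower K (LaurentPolynomial K) A]
    (hinj : Function.Injective (algebraMap (LaurentPolynomial K) A))
    (dA : Derivation ℤ A A) (hdA : ExtendsTddt (K := K) dA)
    (hNoExpLog : NoExpLog (K := K) dA)
    (D : Derivation ℤ (EA K A) (EA K A)) (hD : DProps (K := K) dA D)
    (hDsurj : Function.Surjective (D : EA K A → EA K A))
    (M : Type) [AddCommGroup M] [Module A M]
    (nM : M →+ M) (hnM : IsConnection dA nM) (hM : IsRegSing D nM)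
    (Q : Type) [AddCommGroup Q] [Module A Q]
    (nQ : Q →+ Q) (hnQ : IsConnection dA nQ)
    (N : Type) [AddCommGroup N] [Module A N]
    (nN : N →+ N) (hnN : IsConnection dA nN) (hN : IsRegSing D nN)
    -- `0 → M → Q → N → 0` is an exact sequence of differential modules
    (f : M →ₗ[A] Q) (g : Q →ₗ[A] N)
    (hf : ∀ m : M, f (nM m) = nQ (f m)) (hg : ∀ q : Q, g (nQ q) = nN (g q))
    (hfinj : Function.Injective f) (hgsurj : Function.Surjective g)
    (hexact : LinearMap.range f = LinearMap.ker g) :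
    IsRegSing D nQ := by
  classical
  obtain ⟨hMfin, hMfree, nbM, hnbM, m, φM, hφM⟩ := hM
  obtain ⟨hNfin, hNfree, nbN, hnbN, n, φN, hφN⟩ := hN
  haveI := hMfin; haveI := hMfree; haveI := hNfin; haveI := hNfree
  -- A-linear splitting s : N →ₗ[A] Q of g
  obtain ⟨s, hs⟩ := Module.projective_lifting_property g (LinearMap.id) hgsurj
  have hgs : ∀ x : N, g (s x) = x := fun x => congrArg (fun F => F x) hs
  have hgf : ∀ x : M, g (f x) = 0 := by
    intro x
    have : f x ∈ LinearMap.ker g := hexact ▸ LinearMap.mem_range_self f x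
    exact this
  -- retraction r : Q →ₗ[A] M
  have hmem : ∀ q : Q, q - s (g q) ∈ LinearMap.range f := by
    intro q
    rw [hexact, LinearMap.mem_ker, map_sub, hgs, sub_self]
  let r : Q →ₗ[A] M :=
    ((LinearEquiv.ofInjective f hfinj).symm.toLinearMap).comp
      (LinearMap.codRestrict (LinearMap.range f) (LinearMap.id - s.comp g) hmem)
  have hfr : ∀ q : Q, f (r q) = q - s (g q) := by
    intro q
    have : ((LinearEquiv.ofInjective f hfinj)
        ((LinearEquiv.ofInjective f hfinj).symm
          ⟨q - s (g q), hmem q⟩) : LinearMap.range f)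
        = ⟨q - s (g q), hmem q⟩ := (LinearEquiv.apply_symm_apply _ _)
    have h2 := congrArg Subtype.val this
    simpa [r, LinearMap.codRestrict, LinearEquiv.ofInjective_apply] using h2
  have hrf : ∀ x : M, r (f x) = x := by
    intro x
    apply hfinj
    rw [hfr, hgf, map_zero, sub_zero]
  have hrs : ∀ x : N, r (s x) = 0 := by
    intro x
    apply hfinj
    rw [hfr, hgs, sub_self, map_zero]
  have hq : ∀ q : Q, f (r q) + s (g q) = q := by
    intro q; rw [hfr]; abel
  -- Q is finite free
  let eQ : Q ≃ₗ[A] M × N :=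
    LinearEquiv.ofLinear (LinearMap.prod r g) (LinearMap.coprod f s)
      (by
        apply LinearMap.ext; rintro ⟨x, y⟩
        simp [LinearMap.prod_apply, map_add, hrf, hrs, hgf, hgs])
      (by
        apply LinearMap.ext; intro q
        simp [LinearMap.prod_apply, hq])
  haveI hQfin : Module.Finite A Q := Module.Finite.equiv eQ.symm
  haveI hQfree : Module.Free A Q := Module.Free.of_equiv eQ.symm
  -- the connecting A-linear map h : N →ₗ[A] M
  have hker : ∀ x : N, nQ (s x) - s (nN x) ∈ LinearMap.ker g := by
    intro x
    rw [LinearMap.mem_ker, map_sub, hg, hgs, hgs, sub_self]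
  have hfr' : ∀ q : Q, g q = 0 → f (r q) = q := by
    intro q hq0; rw [hfr, hq0, map_zero, sub_zero]
  let h : N →ₗ[A] M :=
    { toFun := fun x => r (nQ (s x) - s (nN x))
      map_add' := by
        intro x y
        simp only [map_add, AddMonoidHom.map_add]
        rw [map_sub, map_sub, map_sub]
        simp only [map_add, AddMonoidHom.map_add]
        abel
      map_smul' := by
        intro a x
        simp only [RingHom.id_apply]
        apply hfinj
        show f (r (nQ (s (a • x)) - s (nN (a • x))))
            = f (a • r (nQ (s x) - s (nN x)))
        rw [hfr' _ (hker (a • x)), map_smul f, hfr' _ (hker x)]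
        rw [map_smul s a x, hnQ a (s x), hnN a x, map_add s,
          map_smul s, map_smul s, smul_sub]
        abel }
  have hfh : ∀ x : N, f (h x) = nQ (s x) - s (nN x) := fun x => hfr' _ (hker x)
  -- base-changed maps
  let fB := f.baseChange (EA K A)
  let sB := s.baseChange (EA K A)
  let rB := r.baseChange (EA K A)
  let gB := g.baseChange (EA K A)
  let H := h.baseChange (EA K A)
  have hrfB : ∀ u, rB (fB u) = u := by
    intro u
    induction u using TensorProduct.induction_on with
    | zero => simp
    | tmul x v => simp [fB, rB, hrf]
    | add u v hu hv => simp [map_add, hu, hv]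
  have hrsB : ∀ u, rB (sB u) = 0 := by
    intro u
    induction u using TensorProduct.induction_on with
    | zero => simp
    | tmul x v => simp [sB, rB, hrs]
    | add u v hu hv => simp [map_add, hu, hv]
  have hgfB : ∀ u, gB (fB u) = 0 := by
    intro u
    induction u using TensorProduct.induction_on with
    | zero => simp
    | tmul x v => simp [fB, gB, hgf]
    | add u v hu hv => simp [map_add, hu, hv]
  have hgsB : ∀ u, gB (sB u) = u := by
    intro u
    induction u using TensorProduct.induction_on with
    | zero => simp
    | tmul x v => simp [sB, gB, hgs]
    | add u v hu hv => simp [map_add, hu, hv]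
  have hqB : ∀ w, fB (rB w) + sB (gB w) = w := by
    intro w
    induction w using TensorProduct.induction_on with
    | zero => simp
    | tmul x q =>
      simp only [fB, rB, sB, gB, LinearMap.baseChange_tmul]
      rw [← TensorProduct.tmul_add, hq]
    | add u v hu hv =>
      simp only [map_add]
      rw [show fB (rB u) + fB (rB v) + (sB (gB u) + sB (gB v))
          = (fB (rB u) + sB (gB u)) + (fB (rB v) + sB (gB v)) by abel, hu, hv]
  -- the E_A-linear equivalence E : E_A ⊗ Q ≃ (E_A ⊗ M) × (E_A ⊗ N)
  let E : (EA K A ⊗[A] Q) ≃ₗ[EA K A] (EA K A ⊗[A] M) × (EA K A ⊗[A] N) :=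
    LinearEquiv.ofLinear (LinearMap.prod rB gB) (LinearMap.coprod fB sB)
      (by
        apply LinearMap.ext; rintro ⟨u, v⟩
        simp only [LinearMap.comp_apply, LinearMap.coprod_apply,
          LinearMap.prod_apply, LinearMap.id_apply, Pi.prod, Function.prod_apply, map_add]
        rw [hrfB, hrsB, hgfB, hgsB, Prod.mk_add_mk, add_zero, zero_add])
      (by
        apply LinearMap.ext; intro w
        simp only [LinearMap.comp_apply, LinearMap.prod_apply,
          LinearMap.coprod_apply, LinearMap.id_apply, Pi.prod]
        exact hqB w)
  have hEs : ∀ p, E.symm p = fB p.1 + sB p.2 := fun p => rfl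
  have hE : ∀ w, E w = (rB w, gB w) := fun w => rfl
  -- the connection on the product
  let Φ : ((EA K A ⊗[A] M) × (EA K A ⊗[A] N)) →+
      ((EA K A ⊗[A] M) × (EA K A ⊗[A] N)) :=
    { toFun := fun p => (nbM p.1 + H p.2, nbN p.2)
      map_zero' := by simp
      map_add' := by
        rintro ⟨u₁, v₁⟩ ⟨u₂, v₂⟩
        simp only [Prod.mk.injEq, map_add, AddMonoidHom.map_add, Prod.mk_add_mk]
        exact ⟨by abel, trivial⟩ }
  let nbQ : (EA K A ⊗[A] Q) →+ (EA K A ⊗[A] Q) :=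
    (E.symm.toLinearMap.toAddMonoidHom).comp
      (Φ.comp (E.toLinearMap.toAddMonoidHom))
  have hnbQdef : ∀ w, nbQ w = E.symm (Φ (E w)) := fun w => rfl
  have key1 : ∀ (x : EA K A) (m' : M),
      nbQ (x ⊗ₜ[A] (f m')) = D x ⊗ₜ[A] (f m') + x ⊗ₜ[A] nQ (f m') := by
    intro x m'
    rw [hnbQdef]
    have hEx : E (x ⊗ₜ[A] (f m')) = (x ⊗ₜ[A] m', 0) := by
      rw [hE]
      simp [rB, gB, hrf, hgf]
    rw [hEx]
    have hΦ : Φ (x ⊗ₜ[A] m', 0) = (D x ⊗ₜ[A] m' + x ⊗ₜ[A] nM m', 0) := by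
      simp only [Φ, AddMonoidHom.coe_mk, ZeroHom.coe_mk, map_zero, add_zero]
      rw [hnbM]
    rw [hΦ, hEs]
    simp only [fB, map_add, LinearMap.baseChange_tmul, map_zero, add_zero]
    rw [hf]
  have key2 : ∀ (x : EA K A) (y : N),
      nbQ (x ⊗ₜ[A] (s y)) = D x ⊗ₜ[A] (s y) + x ⊗ₜ[A] nQ (s y) := by
    intro x y
    rw [hnbQdef]
    have hEx : E (x ⊗ₜ[A] (s y)) = (0, x ⊗ₜ[A] y) := by
      rw [hE]
      simp [rB, gB, hrs, hgs]
    rw [hEx]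
    have hΦ : Φ (0, x ⊗ₜ[A] y)
        = (x ⊗ₜ[A] h y, D x ⊗ₜ[A] y + x ⊗ₜ[A] nN y) := by
      simp only [Φ, AddMonoidHom.coe_mk, ZeroHom.coe_mk, map_zero, zero_add]
      rw [hnbN]
      simp [H]
    rw [hΦ, hEs]
    simp only [fB, sB, map_add, LinearMap.baseChange_tmul]
    have hfh' : f (h y) + s (nN y) = nQ (s y) := by rw [hfh]; abel
    rw [← hfh', TensorProduct.tmul_add]
    abel
  have hnbQ : ∀ (x : EA K A) (q : Q),
      nbQ (x ⊗ₜ[A] q) = D x ⊗ₜ[A] q + x ⊗ₜ[A] nQ q := by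
    intro x q
    have hsplit := hq q
    calc nbQ (x ⊗ₜ[A] q) = nbQ (x ⊗ₜ[A] (f (r q) + s (g q))) := by rw [hsplit]
      _ = (D x ⊗ₜ[A] f (r q) + x ⊗ₜ[A] nQ (f (r q)))
          + (D x ⊗ₜ[A] s (g q) + x ⊗ₜ[A] nQ (s (g q))) := by
            rw [TensorProduct.tmul_add, AddMonoidHom.map_add, key1, key2]
      _ = D x ⊗ₜ[A] (f (r q) + s (g q))
          + x ⊗ₜ[A] (nQ (f (r q)) + nQ (s (g q))) := by
            rw [TensorProduct.tmul_add, TensorProduct.tmul_add]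
            abel
      _ = D x ⊗ₜ[A] q + x ⊗ₜ[A] nQ q := by
            rw [← AddMonoidHom.map_add nQ, hsplit]
  -- the matrix of the extension in coordinates, and its antiderivative
  let T : (Fin n → EA K A) →ₗ[EA K A] (Fin m → EA K A) :=
    φM.toLinearMap.comp (H.comp φN.symm.toLinearMap)
  choose c hc using fun (i : Fin m) (j : Fin n) =>
    hDsurj (T (fun k => if j = k then 1 else 0) i)
  let C : (Fin n → EA K A) →ₗ[EA K A] (Fin m → EA K A) :=
    { toFun := fun y i => ∑ j, c i j * y j
      map_add' := by
        intro y₁ y₂; funext i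
        simp [mul_add, Finset.sum_add_distrib]
      map_smul' := by
        intro a y
        simp only [RingHom.id_apply]
        funext i
        simp only [Pi.smul_apply, smul_eq_mul, Finset.mul_sum]
        exact Finset.sum_congr rfl fun j _ => by ring }
  have hT : ∀ (y : Fin n → EA K A) (i : Fin m),
      T y i = ∑ j, D (c i j) * y j := by
    intro y i
    have hy := pi_eq_sum_univ y
    conv_lhs => rw [hy]
    rw [map_sum]
    simp only [map_smul]
    rw [Finset.sum_apply]
    simp only [Pi.smul_apply, smul_eq_mul]
    refine Finset.sum_congr rfl fun j _ => ?_
    rw [hc i j]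
    ring
  have hkey : ∀ (y : Fin n → EA K A) (i : Fin m),
      D (C y i) = T y i + C (fun j => D (y j)) i := by
    intro y i
    have hC : ∀ z : Fin n → EA K A, C z i = ∑ j, c i j * z j := by
      intro z
      simp only [C, LinearMap.coe_mk, AddHom.coe_mk]
    rw [hC y, hC (fun j => D (y j)), map_sum, hT, ← Finset.sum_add_distrib]
    refine Finset.sum_congr rfl fun j _ => ?_
    rw [Derivation.leibniz, smul_eq_mul, smul_eq_mul]
    ring
  -- the shear automorphism
  let ψ : ((Fin m → EA K A) × (Fin n → EA K A)) ≃ₗ[EA K A]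
      ((Fin m → EA K A) × (Fin n → EA K A)) :=
    { toFun := fun p => (p.1 + C p.2, p.2)
      invFun := fun p => (p.1 - C p.2, p.2)
      map_add' := by
        rintro ⟨x₁, y₁⟩ ⟨x₂, y₂⟩
        simp only [Prod.mk_add_mk, map_add, Prod.mk.injEq]
        exact ⟨by abel, trivial⟩
      map_smul' := by
        rintro a ⟨x, y⟩
        simp [Prod.smul_mk, map_smul, smul_add]
      left_inv := by
        rintro ⟨x, y⟩
        simp only [map_add, Prod.mk.injEq]
        exact ⟨by abel, trivial⟩
      right_inv := by
        rintro ⟨x, y⟩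
        simp only [map_add, Prod.mk.injEq]
        exact ⟨by abel, trivial⟩ }
  -- packing the two coordinate blocks into Fin (m + n)
  let Pk : ((Fin m → EA K A) × (Fin n → EA K A)) ≃ₗ[EA K A]
      (Fin (m + n) → EA K A) :=
    { toFun := fun p i => Sum.elim p.1 p.2 (finSumFinEquiv.symm i)
      invFun := fun q => (fun j => q (finSumFinEquiv (Sum.inl j)),
                          fun j => q (finSumFinEquiv (Sum.inr j)))
      map_add' := by
        rintro ⟨x₁, y₁⟩ ⟨x₂, y₂⟩
        funext i
        rcases hi : finSumFinEquiv.symm i with j | j <;>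
          simp [hi, Pi.add_apply]
      map_smul' := by
        rintro a ⟨x, y⟩
        funext i
        rcases hi : finSumFinEquiv.symm i with j | j <;>
          simp [hi, Pi.smul_apply, smul_eq_mul]
      left_inv := by
        rintro ⟨x, y⟩
        simp only [Equiv.symm_apply_apply]
        rfl
      right_inv := by
        intro q
        funext i
        have hi' : finSumFinEquiv (finSumFinEquiv.symm i) = i :=
          Equiv.apply_symm_apply _ _
        rcases hi : finSumFinEquiv.symm i with j | j
        · rw [hi] at hi'
          simp only [hi, Sum.elim_inl, hi']
        · rw [hi] at hi'
          simp only [hi, Sum.elim_inr, hi'] }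
  have hPk : ∀ p i, Pk p i = Sum.elim p.1 p.2 (finSumFinEquiv.symm i) :=
    fun p i => rfl
  -- the final trivialization
  let φQ : (EA K A ⊗[A] Q) ≃ₗ[EA K A] (Fin (m + n) → EA K A) :=
    E ≪≫ₗ (φM.prodCongr φN) ≪≫ₗ ψ ≪≫ₗ Pk
  refine ⟨hQfin, hQfree, nbQ, hnbQ, m + n, φQ, ?_⟩
  intro w i
  set u := E w with hu
  set x := φM u.1 with hx
  set y := φN u.2 with hy
  have hφQw : φQ w = Pk (x + C y, y) := by
    simp only [φQ, LinearEquiv.trans_apply, ← hu]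
    rfl
  have hEnbQ : E (nbQ w) = Φ u := by
    rw [hnbQdef, ← hu, LinearEquiv.apply_symm_apply]
  have hMN : (φM.prodCongr φN) (Φ u) = ((fun i => D (x i)) + T y, fun i => D (y i)) := by
    have h1 : φM (nbM u.1 + H u.2) = (fun i => D (x i)) + T y := by
      rw [map_add]
      congr 1
      · funext i
        exact hφM u.1 i
      · show φM (H u.2) = T (φN u.2)
        simp only [T, LinearMap.comp_apply, LinearEquiv.coe_coe,
          LinearEquiv.symm_apply_apply]
    have h2 : φN (nbN u.2) = fun i => D (y i) := by
      funext i
      exact hφN u.2 i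
    show (φM (nbM u.1 + H u.2), φN (nbN u.2)) = _
    rw [h1, h2]
  have hφQnbQ : φQ (nbQ w) = Pk ((fun i => D (x i)) + T y + C (fun j => D (y j)),
      fun j => D (y j)) := by
    simp only [φQ, LinearEquiv.trans_apply]
    rw [hEnbQ, hMN]
    rfl
  rw [hφQnbQ, hφQw, hPk, hPk]
  rcases hi : finSumFinEquiv.symm i with j | j
  · simp only [Sum.elim_inl, Pi.add_apply]
    rw [map_add D, hkey y j]
    abel
  · simp only [Sum.elim_inr]


end
end
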